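/- arXiv:2403.18400 — 7 statements merged into one kernel-verified Lean document; each statement's English description precedes it below -/
import Mathlib

section
/- Let A ∈ ℝ^{n×n} be a symmetric positive definite matrix with eigenvalue decomposition A = U·S·Uᵀ, where U is orthogonal and S is diagonal with strictly positive diagonal entries, and let ε > 0. Define the diagonal matrix Ŝ with entries Ŝ_{ii} = 1/(S_{ii} + ε·S_{ii}^{1/2}). If U·Ŝ·S·Uᵀ has block-diagonal form (n₁, …, n_r), then U·S^{-1}·Ŝ·Uᵀ and U·S·Uᵀ = A also have block-diagonal form (n₁, …, n_r). -/
open Matrix Polynomial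

def IsBlockDiag {n r : ℕ} (b : Fin n → Fin r) (A : Matrix (Fin n) (Fin n) ℝ) : Prop :=
  ∀ i j, b i ≠ b j → A i j = 0

namespace BDaux

variable {n r : ℕ} (b : Fin n → Fin r)

lemma bd_mul {X Y : Matrix (Fin n) (Fin n) ℝ} (hX : IsBlockDiag b X)
    (hY : IsBlockDiag b Y) : IsBlockDiag b (X * Y) := by
  intro i j h
  rw [Matrix.mul_apply]
  apply Finset.sum_eq_zero
  intro k _
  by_cases hk : b i = b k
  · rw [hY k j (hk ▸ h), mul_zero]
  · rw [hX i k hk, zero_mul]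

lemma bd_diagonal (v : Fin n → ℝ) : IsBlockDiag b (Matrix.diagonal v) := by
  intro i j h
  exact Matrix.diagonal_apply_ne v (fun e => h (e ▸ rfl))

lemma bd_add {X Y : Matrix (Fin n) (Fin n) ℝ} (hX : IsBlockDiag b X)
    (hY : IsBlockDiag b Y) : IsBlockDiag b (X + Y) := by
  intro i j h
  simp [hX i j h, hY i j h]

lemma bd_pow {X : Matrix (Fin n) (Fin n) ℝ} (hX : IsBlockDiag b X) (k : ℕ) :
    IsBlockDiag b (X ^ k) := by
  induction k with
  | zero => rw [pow_zero, ← Matrix.diagonal_one]; exact bd_diagonal b 1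
  | succ k ih => rw [pow_succ]; exact bd_mul b ih hX

lemma bd_aeval {M : Matrix (Fin n) (Fin n) ℝ} (hM : IsBlockDiag b M) (p : ℝ[X]) :
    IsBlockDiag b (aeval M p) := by
  induction p using Polynomial.induction_on' with
  | add p q hp hq => rw [map_add]; exact bd_add b hp hq
  | monomial k a =>
      rw [aeval_monomial]
      refine bd_mul b ?_ (bd_pow b hM k)
      rw [Matrix.algebraMap_eq_diagonal]
      exact bd_diagonal b _

/-- Conjugation by an orthogonal matrix is an algebra hom. -/
def conjA (U : Matrix (Fin n) (Fin n) ℝ) (hU : Uᵀ * U = 1) (hUU : U * Uᵀ = 1) :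
    Matrix (Fin n) (Fin n) ℝ →ₐ[ℝ] Matrix (Fin n) (Fin n) ℝ where
  toFun X := U * X * Uᵀ
  map_one' := by show U * 1 * Uᵀ = 1; rw [mul_one, hUU]
  map_mul' X Y := by
    show U * (X * Y) * Uᵀ = (U * X * Uᵀ) * (U * Y * Uᵀ)
    have h : (U * X * Uᵀ) * (U * Y * Uᵀ) = U * X * (Uᵀ * U) * (Y * Uᵀ) := by
      simp only [Matrix.mul_assoc]
    rw [h, hU, mul_one]
    simp only [Matrix.mul_assoc]
  map_zero' := by show U * 0 * Uᵀ = 0; simp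
  map_add' X Y := by
    show U * (X + Y) * Uᵀ = U * X * Uᵀ + U * Y * Uᵀ
    rw [Matrix.mul_add, Matrix.add_mul]
  commutes' r := by
    show U * algebraMap ℝ _ r * Uᵀ = algebraMap ℝ _ r
    rw [Algebra.algebraMap_eq_smul_one, Matrix.mul_smul, mul_one, Matrix.smul_mul, hUU]

lemma aeval_conj (U : Matrix (Fin n) (Fin n) ℝ) (hU : Uᵀ * U = 1) (hUU : U * Uᵀ = 1)
    (g : Fin n → ℝ) (p : ℝ[X]) :
    aeval (U * Matrix.diagonal g * Uᵀ) p
      = U * Matrix.diagonal (fun i => p.eval (g i)) * Uᵀ := by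
  have h1 : U * Matrix.diagonal g * Uᵀ = conjA U hU hUU (Matrix.diagonal g) := rfl
  rw [h1, Polynomial.aeval_algHom_apply]
  have h2 : aeval (Matrix.diagonal g) p = Matrix.diagonal (fun i => p.eval (g i)) := by
    have h3 : Matrix.diagonal g = (Matrix.diagonalAlgHom (R := ℝ) (n := Fin n) (α := ℝ)) g := rfl
    have h4 : (aeval g p : Fin n → ℝ) = fun i => p.eval (g i) := by
      funext i
      have h5 := (Polynomial.aeval_algHom_apply (Pi.evalAlgHom ℝ (fun _ : Fin n => ℝ) i) g p).symm
      simp only [Pi.evalAlgHom_apply] at h5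
      rw [h5, ← Polynomial.coe_aeval_eq_eval]
    rw [h3, Polynomial.aeval_algHom_apply, Matrix.diagonalAlgHom_apply, h4]
  rw [h2]
  rfl

end BDaux

/-- Let `A = U S Uᵀ` be symmetric positive definite (`U` orthogonal, `S = diag d`, `d > 0`),
let `ε > 0` and `Ŝ = diag (1 / (dᵢ + ε dᵢ^{1/2}))`.  If `U Ŝ S Uᵀ` has block-diagonal
form `(n₁, …, n_r)`, then so do `U S⁻¹ Ŝ Uᵀ` and `U S Uᵀ = A`. -/
theorem stmt3 {n r : ℕ} (b : Fin n → Fin r) (hb : Monotone b)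
    (A U : Matrix (Fin n) (Fin n) ℝ) (d : Fin n → ℝ) (hd : ∀ i, 0 < d i)
    (hU : Uᵀ * U = 1) (hUU : U * Uᵀ = 1)
    (hAeig : A = U * Matrix.diagonal d * Uᵀ) (hA : A.PosDef)
    (ε : ℝ) (hε : 0 < ε)
    (hblock : IsBlockDiag b
      (U * Matrix.diagonal (fun i => (d i + ε * Real.sqrt (d i))⁻¹ * d i) * Uᵀ)) :
    IsBlockDiag b
      (U * Matrix.diagonal (fun i => (d i)⁻¹ * (d i + ε * Real.sqrt (d i))⁻¹) * Uᵀ) ∧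
    IsBlockDiag b A := by
  set g : Fin n → ℝ := fun i => (d i + ε * Real.sqrt (d i))⁻¹ * d i with hg
  -- injectivity of g through d
  have hginj : ∀ i j, g i = g j → d i = d j := by
    intro i j hij
    have hdi := hd i; have hdj := hd j
    have hsi : 0 < Real.sqrt (d i) := Real.sqrt_pos.mpr hdi
    have hsj : 0 < Real.sqrt (d j) := Real.sqrt_pos.mpr hdj
    have hdeni : 0 < d i + ε * Real.sqrt (d i) := by positivity
    have hdenj : 0 < d j + ε * Real.sqrt (d j) := by positivity
    have h1 : d i * (d j + ε * Real.sqrt (d j)) = d j * (d i + ε * Real.sqrt (d i)) := by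
      have hij' := hij
      simp only [hg] at hij'
      rw [inv_mul_eq_div, inv_mul_eq_div, div_eq_div_iff hdeni.ne' hdenj.ne'] at hij'
      linarith [hij']
    have h2 : d i * Real.sqrt (d j) = d j * Real.sqrt (d i) := by
      have hε' := hε.ne'
      nlinarith [h1]
    have h3 : (d i * Real.sqrt (d j))^2 = (d j * Real.sqrt (d i))^2 := by rw [h2]
    rw [mul_pow, mul_pow, Real.sq_sqrt hdi.le, Real.sq_sqrt hdj.le] at h3
    nlinarith [h3, mul_pos hdi hdj]
  -- main helper: any function of d gives a block-diagonal matrix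
  have key : ∀ f : ℝ → ℝ, IsBlockDiag b (U * Matrix.diagonal (fun i => f (d i)) * Uᵀ) := by
    intro f
    classical
    set F : ℝ → ℝ := fun x => if h : ∃ i, g i = x then f (d h.choose) else 0 with hF
    have hFg : ∀ i, F (g i) = f (d i) := by
      intro i
      have h : ∃ k, g k = g i := ⟨i, rfl⟩
      have := h.choose_spec
      simp only [hF, dif_pos h]
      rw [hginj _ _ this]
    set s : Finset ℝ := Finset.univ.image g with hs
    set p : ℝ[X] := Lagrange.interpolate s id F with hp
    have hpg : ∀ i, p.eval (g i) = f (d i) := by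
      intro i
      have hmem : g i ∈ s := Finset.mem_image_of_mem g (Finset.mem_univ i)
      have := Lagrange.eval_interpolate_at_node (v := id) (r := F) (i := g i)
        (Set.injOn_id _) hmem
      rw [hFg i] at this
      exact this
    have : (fun i => f (d i)) = fun i => p.eval (g i) := by
      funext i; rw [hpg i]
    rw [this, ← BDaux.aeval_conj U hU hUU g p]
    exact BDaux.bd_aeval b hblock p
  constructor
  · exact key (fun x => x⁻¹ * (x + ε * Real.sqrt x)⁻¹)
  · rw [hAeig]
    have := key id
    simpa using this
end

section
/- Let A ∈ ℝ^{n×n} be a symmetric positive definite matrix with eigenvalue decomposition A = U·S·Uᵀ, where U is orthogonal and S is diagonal with strictly positive diagonal entries, and let ε > 0. Define the diagonal matrix Ŝ with entries Ŝ_{ii} = 1/(S_{ii} + ε). If U·Ŝ·S·Uᵀ has block-diagonal form (n₁, …, n_r), then U·S^{-1}·Ŝ·Uᵀ and U·S·Uᵀ = A also have block-diagonal form (n₁, …, n_r). -/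
open Matrix

/-- Block projection matrix. -/
def blockP {n r : ℕ} (b : Fin n → Fin r) (c : Fin r) : Matrix (Fin n) (Fin n) ℝ :=
  Matrix.diagonal (fun i => if b i = c then 1 else 0)

lemma isBlockDiag_iff_comm {n r : ℕ} (b : Fin n → Fin r) (B : Matrix (Fin n) (Fin n) ℝ) :
    IsBlockDiag b B ↔ ∀ c, B * blockP b c = blockP b c * B := by
  constructor
  · intro h c
    ext i j
    simp only [blockP, Matrix.mul_diagonal, Matrix.diagonal_mul]
    by_cases hij : b i = b j
    · rw [hij]; exact mul_comm _ _
    · rw [h i j hij]; ring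
  · intro h i j hij
    have := congrArg (fun M => M i j) (h (b j))
    simp only [blockP, Matrix.mul_diagonal, Matrix.diagonal_mul, if_pos rfl, if_neg hij] at this
    simpa using this

lemma comm_of_inv {n r : ℕ} (b : Fin n → Fin r) (B B' : Matrix (Fin n) (Fin n) ℝ)
    (h1 : B * B' = 1) (h2 : B' * B = 1)
    (h : ∀ c, B * blockP b c = blockP b c * B) :
    ∀ c, B' * blockP b c = blockP b c * B' := by
  intro c
  calc B' * blockP b c = B' * blockP b c * (B * B') := by rw [h1, mul_one]
    _ = B' * (blockP b c * B) * B' := by noncomm_ring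
    _ = B' * (B * blockP b c) * B' := by rw [h c]
    _ = (B' * B) * (blockP b c * B') := by noncomm_ring
    _ = blockP b c * B' := by rw [h2, one_mul]

/-- Let `A = U S Uᵀ` be symmetric positive definite (`U` orthogonal, `S = diag d`, `d > 0`),
let `ε > 0` and `Ŝ = diag (1 / (dᵢ + ε))`.  If `U Ŝ S Uᵀ` has block-diagonal form
`(n₁, …, n_r)`, then so do `U S⁻¹ Ŝ Uᵀ` and `U S Uᵀ = A`. -/
theorem stmt4 {n r : ℕ} (b : Fin n → Fin r) (hb : Monotone b)
    (A U : Matrix (Fin n) (Fin n) ℝ) (d : Fin n → ℝ) (hd : ∀ i, 0 < d i)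
    (hU : Uᵀ * U = 1) (hUU : U * Uᵀ = 1)
    (hAeig : A = U * Matrix.diagonal d * Uᵀ) (hA : A.PosDef)
    (ε : ℝ) (hε : 0 < ε)
    (hblock : IsBlockDiag b
      (U * Matrix.diagonal (fun i => (d i + ε)⁻¹ * d i) * Uᵀ)) :
    IsBlockDiag b
      (U * Matrix.diagonal (fun i => (d i)⁻¹ * (d i + ε)⁻¹) * Uᵀ) ∧
    IsBlockDiag b A := by
  have hdne : ∀ i, d i ≠ 0 := fun i => (hd i).ne'
  have hdεne : ∀ i, d i + ε ≠ 0 := fun i => (add_pos (hd i) hε).ne'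
  -- abbreviation
  set W : (Fin n → ℝ) → Matrix (Fin n) (Fin n) ℝ :=
    fun f => U * Matrix.diagonal f * Uᵀ with hW
  have keymul : ∀ f g, W f * W g = W (fun i => f i * g i) := by
    intro f g
    simp only [hW]
    calc U * Matrix.diagonal f * Uᵀ * (U * Matrix.diagonal g * Uᵀ)
        = U * Matrix.diagonal f * (Uᵀ * U) * Matrix.diagonal g * Uᵀ := by noncomm_ring
      _ = U * (Matrix.diagonal f * Matrix.diagonal g) * Uᵀ := by rw [hU]; noncomm_ring
      _ = U * Matrix.diagonal (fun i => f i * g i) * Uᵀ := by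
          rw [Matrix.diagonal_mul_diagonal]
  have keyone : W (fun _ => (1:ℝ)) = 1 := by
    simp only [hW]
    rw [show (Matrix.diagonal fun _ => (1:ℝ)) = 1 from Matrix.diagonal_one, mul_one, hUU]
  have keyadd : ∀ f g, W f + W g = W (fun i => f i + g i) := by
    intro f g
    simp only [hW]
    rw [show (Matrix.diagonal fun i => f i + g i) = Matrix.diagonal f + Matrix.diagonal g by
      rw [Matrix.diagonal_add]]
    noncomm_ring
  have keysmul : ∀ (t : ℝ) f, t • W f = W (fun i => t * f i) := by
    intro t f
    simp only [hW]
    rw [show (Matrix.diagonal fun i => t * f i) = t • Matrix.diagonal f by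
      ext i j; by_cases h : i = j <;> simp [Matrix.diagonal, h]]
    rw [Matrix.mul_smul, Matrix.smul_mul]
  have keysub : ∀ f g, W f - W g = W (fun i => f i - g i) := by
    intro f g
    simp only [hW]
    rw [show (Matrix.diagonal fun i => f i - g i) = Matrix.diagonal f - Matrix.diagonal g by
      ext i j; by_cases h : i = j <;> simp [Matrix.diagonal, h]]
    noncomm_ring
  -- C = W f, f i = (d i + ε)⁻¹ * d i, commutes with all projections
  rw [isBlockDiag_iff_comm] at hblock
  -- N = W ((d+ε)⁻¹) = ε⁻¹ • (1 - C)
  have hN : W (fun i => (d i + ε)⁻¹) =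
      ε⁻¹ • (1 - W (fun i => (d i + ε)⁻¹ * d i)) := by
    conv_rhs => rw [← keyone]
    rw [keysub, keysmul,
      show (fun i => ε⁻¹ * (1 - (d i + ε)⁻¹ * d i)) = fun i => (d i + ε)⁻¹ from
        funext fun i => by field_simp [hdne i, hdεne i]; ring]
  have hNcomm : ∀ c, W (fun i => (d i + ε)⁻¹) * blockP b c
      = blockP b c * W (fun i => (d i + ε)⁻¹) := by
    intro c
    rw [hN, Matrix.smul_mul, Matrix.mul_smul, sub_mul, mul_sub, one_mul, mul_one, hblock c]
  -- D = W (d + ε) is the two-sided inverse of N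
  have hND : W (fun i => (d i + ε)⁻¹) * W (fun i => d i + ε) = 1 := by
    rw [keymul, show (fun i => (d i + ε)⁻¹ * (d i + ε)) = fun _ => (1:ℝ) from
      funext fun i => by field_simp [hdne i, hdεne i], keyone]
  have hDN : W (fun i => d i + ε) * W (fun i => (d i + ε)⁻¹) = 1 := by
    rw [keymul, show (fun i => (d i + ε) * (d i + ε)⁻¹) = fun _ => (1:ℝ) from
      funext fun i => by field_simp [hdne i, hdεne i], keyone]
  have hDcomm := comm_of_inv b _ _ hND hDN hNcomm
  -- A = W d = D - ε • 1
  have hAW : A = W d := hAeig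
  have hAcomm : ∀ c, A * blockP b c = blockP b c * A := by
    intro c
    have : A = W (fun i => d i + ε) + (-ε) • (1 : Matrix (Fin n) (Fin n) ℝ) := by
      rw [← keyone, keysmul, keyadd, hAW]
      congr 1; funext i; ring
    rw [this, add_mul, mul_add, Matrix.smul_mul, Matrix.mul_smul, one_mul, mul_one, hDcomm c]
  -- E = A * D = W (d * (d+ε)) commutes; T = W (d⁻¹ (d+ε)⁻¹) is its two-sided inverse
  have hEcomm : ∀ c, (A * W (fun i => d i + ε)) * blockP b c
      = blockP b c * (A * W (fun i => d i + ε)) := by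
    intro c
    calc (A * W (fun i => d i + ε)) * blockP b c
        = A * (W (fun i => d i + ε) * blockP b c) := by noncomm_ring
      _ = A * (blockP b c * W (fun i => d i + ε)) := by rw [hDcomm c]
      _ = (A * blockP b c) * W (fun i => d i + ε) := by noncomm_ring
      _ = (blockP b c * A) * W (fun i => d i + ε) := by rw [hAcomm c]
      _ = blockP b c * (A * W (fun i => d i + ε)) := by noncomm_ring
  have hAE : A * W (fun i => d i + ε) = W (fun i => d i * (d i + ε)) := by
    rw [hAW, keymul]
  have hTE : W (fun i => (d i)⁻¹ * (d i + ε)⁻¹) * (A * W (fun i => d i + ε)) = 1 := by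
    rw [hAE, keymul, show (fun i => (d i)⁻¹ * (d i + ε)⁻¹ * (d i * (d i + ε)))
      = fun _ => (1:ℝ) from funext fun i => by field_simp [hdne i, hdεne i], keyone]
  have hET : (A * W (fun i => d i + ε)) * W (fun i => (d i)⁻¹ * (d i + ε)⁻¹) = 1 := by
    rw [hAE, keymul, show (fun i => d i * (d i + ε) * ((d i)⁻¹ * (d i + ε)⁻¹))
      = fun _ => (1:ℝ) from funext fun i => by field_simp [hdne i, hdεne i], keyone]
  have hTcomm := comm_of_inv b _ _ hET hTE hEcomm
  exact ⟨(isBlockDiag_iff_comm b _).mpr hTcomm, (isBlockDiag_iff_comm b _).mpr hAcomm⟩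
end

section
/- Let W ∈ ℝ^{r×r} be diagonal with W₁₁ ≥ W₂₂ ≥ ⋯ ≥ W_{rr} > 0, and let X ∈ ℝ^{m×n} with singular values σ₁ ≥ ⋯ ≥ σ_{rank(X)} > 0 and rank(X) ≤ r. Then the minimum of (1/2)(‖A·W^{-1}‖_F² + ‖B‖_F²) over all A ∈ ℝ^{m×r} and B ∈ ℝ^{n×r} with X = A·Bᵀ is attained and equals Σ_{i=1}^{rank(X)} σ_i / W_{ii}. -/
open Matrix

/-- Squared Frobenius norm. -/
noncomputable def frobSq {m n : ℕ} (A : Matrix (Fin m) (Fin n) ℝ) : ℝ :=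
  ∑ i, ∑ j, (A i j) ^ 2

open Finset RealInnerProductSpace

lemma diag_trace_eq {s r : ℕ} (σ : Fin s → ℝ) (a b : Fin r → EuclideanSpace ℝ (Fin s))
    (hD : ∀ i p : Fin s, (if i = p then σ i else 0) = ∑ j, a j i * b j p) :
    ∑ i, σ i = ∑ j, ⟪a j, b j⟫ := by
  have h1 : ∀ i, σ i = ∑ j, a j i * b j i := by
    intro i; have := hD i i; simpa using this
  calc ∑ i, σ i = ∑ i, ∑ j, a j i * b j i := by simp_rw [← h1]
    _ = ∑ j, ∑ i, a j i * b j i := Finset.sum_comm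
    _ = ∑ j, ⟪a j, b j⟫ := by
        apply Finset.sum_congr rfl; intro j _
        simp [PiLp.inner_apply]
        exact Finset.sum_congr rfl fun _ _ => mul_comm _ _

lemma diag_quad_eq {s r : ℕ} (σ : Fin s → ℝ) (a b : Fin r → EuclideanSpace ℝ (Fin s))
    (hD : ∀ i p : Fin s, (if i = p then σ i else 0) = ∑ j, a j i * b j p)
    (x : EuclideanSpace ℝ (Fin s)) :
    ∑ i, σ i * (x i)^2 = ∑ j, ⟪a j, x⟫ * ⟪b j, x⟫ := by
  calc ∑ i, σ i * (x i)^2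
      = ∑ i, ∑ p, (if i = p then σ i else 0) * (x i * x p) := by
        apply Finset.sum_congr rfl; intro i _
        rw [Finset.sum_eq_single i]
        · simp [sq, mul_assoc]
        · intro p _ hpi; simp [Ne.symm hpi]
        · simp
    _ = ∑ i, ∑ p, (∑ j, a j i * b j p) * (x i * x p) := by
        apply Finset.sum_congr rfl; intro i _
        apply Finset.sum_congr rfl; intro p _
        rw [← hD]
    _ = ∑ i, ∑ p, ∑ j, (a j i * x i) * (b j p * x p) := by
        apply Finset.sum_congr rfl; intro i _
        apply Finset.sum_congr rfl; intro p _
        rw [Finset.sum_mul]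
        apply Finset.sum_congr rfl; intro j _; ring
    _ = ∑ i, ∑ j, ∑ p, (a j i * x i) * (b j p * x p) := by
        apply Finset.sum_congr rfl; intro i _
        exact Finset.sum_comm
    _ = ∑ j, ∑ i, ∑ p, (a j i * x i) * (b j p * x p) := Finset.sum_comm
    _ = ∑ j, ⟪a j, x⟫ * ⟪b j, x⟫ := by
        apply Finset.sum_congr rfl; intro j _
        rw [← Finset.sum_mul_sum]
        simp [PiLp.inner_apply]
        congr 1 <;> exact Finset.sum_congr rfl fun _ _ => mul_comm _ _

lemma stepB_lemma {s : ℕ} (σ p : Fin s → ℝ) (hσ0 : ∀ i, 0 ≤ σ i) (hσm : Antitone σ)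
    (hp0 : ∀ i, 0 ≤ p i) (hp1 : ∀ i, p i ≤ 1) (k : ℕ)
    (hpsum : (s:ℝ) - k ≤ ∑ i, p i) :
    ∑ i ∈ univ.filter (fun i : Fin s => k ≤ (i : ℕ)), σ i ≤ ∑ i, σ i * p i := by
    by_cases hks : s ≤ k
    · have hempty : univ.filter (fun i : Fin s => k ≤ (i : ℕ)) = ∅ := by
        apply Finset.filter_false_of_mem
        intro i _
        push_neg
        exact lt_of_lt_of_le i.2 hks
      rw [hempty, Finset.sum_empty]
      exact Finset.sum_nonneg fun i _ => mul_nonneg (hσ0 i) (hp0 i)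
    · push_neg at hks
      set i0 : Fin s := ⟨k, hks⟩ with hi0
      set t0 := σ i0 with ht0def
      have ht0 : 0 ≤ t0 := hσ0 i0
      set G := univ.filter (fun i : Fin s => k ≤ (i : ℕ)) with hG
      set L := univ.filter (fun i : Fin s => ¬ (k ≤ (i : ℕ))) with hL
      have hsplit : ∑ i ∈ G, (σ i * p i) + ∑ i ∈ L, (σ i * p i) = ∑ i, σ i * p i :=
        Finset.sum_filter_add_sum_filter_not univ _ _
      have hcardL : k ≤ L.card := by
        have h1 : (univ : Finset (Fin k)).card ≤ L.card := by
          refine Finset.card_le_card_of_injOn (fun j => Fin.castLE hks.le j) ?_ ?_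
          · intro x _
            simp only [hL, Finset.coe_filter, Finset.mem_filter, Finset.mem_univ, true_and, not_le,
              Set.mem_setOf_eq]
            exact x.2
          · intro x _ y _ h
            exact Fin.castLE_injective _ h
        simpa using h1
      have hcards : G.card + L.card = s := by
        have := Finset.card_filter_add_card_filter_not
          (s := (univ : Finset (Fin s))) (p := fun i : Fin s => k ≤ (i : ℕ))
        simpa [hG, hL] using this
      have hcardG : (G.card : ℝ) ≤ ∑ i, p i := by
        have h1 : (G.card : ℝ) ≤ (s : ℝ) - k := by
          have h2 : G.card + k ≤ s := by omega
          have h3 := (Nat.cast_le (α := ℝ)).mpr h2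
          push_cast at h3
          linarith
        linarith [hpsum]
      -- pointwise bounds
      have hbG : ∀ i ∈ G, σ i ≤ σ i * p i + t0 * (1 - p i) := by
        intro i hi
        simp only [hG, Finset.mem_filter, Finset.mem_univ, true_and] at hi
        have hσle : σ i ≤ t0 := hσm (show i0 ≤ i by rw [Fin.le_def]; exact hi)
        nlinarith [hp1 i, hp0 i, hσ0 i]
      have hbL : ∀ i ∈ L, t0 * p i ≤ σ i * p i := by
        intro i hi
        simp only [hL, Finset.mem_filter, Finset.mem_univ, true_and, not_le] at hi
        have hσge : t0 ≤ σ i := hσm (show i ≤ i0 by rw [Fin.le_def]; exact le_of_lt hi)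
        nlinarith [hp0 i]
      have hGsum : ∑ i ∈ G, σ i ≤ ∑ i ∈ G, (σ i * p i) + t0 * ∑ i ∈ G, (1 - p i) := by
        rw [Finset.mul_sum, ← Finset.sum_add_distrib]
        exact Finset.sum_le_sum hbG
      have hmid : t0 * ∑ i ∈ G, (1 - p i) ≤ t0 * ∑ i ∈ L, p i := by
        apply mul_le_mul_of_nonneg_left _ ht0
        have e1 : ∑ i ∈ G, (1 - p i) = (G.card : ℝ) - ∑ i ∈ G, p i := by
          rw [Finset.sum_sub_distrib]
          simp
        have e2 : ∑ i ∈ L, p i = ∑ i, p i - ∑ i ∈ G, p i := by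
          have := Finset.sum_filter_add_sum_filter_not univ
            (fun i : Fin s => k ≤ (i : ℕ)) p
          rw [← hG, ← hL] at this
          linarith
        rw [e1, e2]
        linarith [hcardG]
      have hLsum : t0 * ∑ i ∈ L, p i ≤ ∑ i ∈ L, (σ i * p i) := by
        rw [Finset.mul_sum]
        exact Finset.sum_le_sum hbL
      linarith [hGsum, hmid, hLsum, hsplit]

lemma tail_ineq {s r : ℕ} (σ : Fin s → ℝ) (hσ0 : ∀ i, 0 ≤ σ i) (hσm : Antitone σ)
    (a b : Fin r → EuclideanSpace ℝ (Fin s))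
    (hD : ∀ i p : Fin s, (if i = p then σ i else 0) = ∑ j, a j i * b j p)
    (k : ℕ) :
    ∑ i ∈ univ.filter (fun i : Fin s => k ≤ (i : ℕ)), σ i
      ≤ ∑ j ∈ univ.filter (fun j : Fin r => k ≤ (j : ℕ)), ‖a j‖ * ‖b j‖ := by
  classical
  -- the span of the "head" columns of a
  set KS : Finset (EuclideanSpace ℝ (Fin s)) :=
    (univ.filter (fun j : Fin r => (j : ℕ) < k)).image a with hKS
  set K : Submodule ℝ (EuclideanSpace ℝ (Fin s)) := Submodule.span ℝ (KS : Set _) with hK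
  have hdk : Module.finrank ℝ K ≤ k := by
    refine (finrank_span_finset_le_card KS).trans (Finset.card_image_le.trans ?_)
    have h1 : (univ.filter (fun j : Fin r => (j : ℕ) < k)).card
        ≤ (Finset.range k).card := by
      refine Finset.card_le_card_of_injOn (fun j => (j : ℕ)) ?_ ?_
      · intro x hx; simp at hx ⊢; exact hx
      · intro x _ y _ h; exact Fin.val_injective h
    simpa using h1
  set d := Module.finrank ℝ K with hd
  set f := stdOrthonormalBasis ℝ K with hf
  set g : Fin d → EuclideanSpace ℝ (Fin s) := fun t => (f t : EuclideanSpace ℝ (Fin s)) with hg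
  have hgon : Orthonormal ℝ g := f.orthonormal.comp_linearIsometry K.subtypeₗᵢ
  have hgite : ∀ t u, ⟪g t, g u⟫ = if t = u then (1:ℝ) else 0 := fun t u =>
    orthonormal_iff_ite.mp hgon t u
  -- expansion of elements of K
  have hexp : ∀ x ∈ K, x = ∑ t, ⟪g t, x⟫ • g t := by
    intro x hx
    have h1 := f.sum_repr' ⟨x, hx⟩
    have h2 := congrArg (Subtype.val) h1
    push_cast at h2
    conv_lhs => rw [← h2]
    apply Finset.sum_congr rfl
    intro t _
    congr 1
  -- coefficients p i
  set p : Fin s → ℝ := fun i => 1 - ∑ t, (g t i)^2 with hp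
  have hp1 : ∀ i, p i ≤ 1 := by
    intro i
    have : (0:ℝ) ≤ ∑ t, (g t i)^2 := Finset.sum_nonneg fun t _ => sq_nonneg _
    simp [hp]; linarith
  have hp0 : ∀ i, 0 ≤ p i := by
    intro i
    have hb := hgon.sum_inner_products_le (EuclideanSpace.single i (1:ℝ)) (s := univ)
    have hei : ∀ t, ⟪g t, EuclideanSpace.single i (1:ℝ)⟫ = g t i := by
      intro t
      rw [real_inner_comm]
      simp [EuclideanSpace.inner_single_left]
    have hn : ‖EuclideanSpace.single i (1:ℝ)‖ = 1 := by
      simp [EuclideanSpace.norm_single]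
    rw [hn] at hb
    simp only [hei] at hb
    have : ∑ t, (g t i)^2 ≤ 1 := by
      calc ∑ t, (g t i)^2 = ∑ t, ‖g t i‖^2 := by
            apply Finset.sum_congr rfl; intro t _; rw [Real.norm_eq_abs, sq_abs]
        _ ≤ 1^2 := hb
        _ = 1 := one_pow 2
    simp [hp]; linarith
  -- sum of p
  have hpsum : (s:ℝ) - d ≤ ∑ i, p i := by
    have hnorm : ∀ t, ∑ i, (g t i)^2 = 1 := by
      intro t
      have := hgon.1 t
      have h2 : ‖g t‖^2 = 1 := by rw [this]; norm_num
      rw [← h2, EuclideanSpace.norm_sq_eq]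
      simp [Real.norm_eq_abs, sq_abs]
    have heq : ∑ i, p i = (s:ℝ) - ∑ t, ∑ i, (g t i)^2 := by
      simp only [hp, Finset.sum_sub_distrib]
      rw [Finset.sum_comm]
      simp
    rw [heq]
    simp only [hnorm, Finset.sum_const, Finset.card_univ, Fintype.card_fin, nsmul_eq_mul,
      mul_one]
    exact le_refl _
  -- main identity:  ∑ σ p  =  ∑_j c j
  set c : Fin r → ℝ := fun j => ⟪a j, b j⟫ - ∑ t, ⟪a j, g t⟫ * ⟪b j, g t⟫ with hc
  have keyp : ∑ i, σ i * p i = ∑ j, c j := by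
    have e1 : ∑ i, σ i * p i = (∑ i, σ i) - ∑ t, ∑ i, σ i * (g t i)^2 := by
      simp only [hp, mul_sub, mul_one, Finset.sum_sub_distrib, Finset.mul_sum]
      rw [Finset.sum_comm]
    rw [e1, diag_trace_eq σ a b hD]
    have e2 : ∀ t, ∑ i, σ i * (g t i)^2 = ∑ j, ⟪a j, g t⟫ * ⟪b j, g t⟫ := fun t =>
      diag_quad_eq σ a b hD (g t)
    simp only [e2, hc]
    rw [Finset.sum_comm, Finset.sum_sub_distrib]
  -- c j as an inner product
  have hcinner : ∀ j, c j = ⟪a j - ∑ t, ⟪a j, g t⟫ • g t, b j⟫ := by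
    intro j
    rw [inner_sub_left, sum_inner]
    simp only [real_inner_smul_left, hc]
    congr 1
    apply Finset.sum_congr rfl
    intro t _
    rw [real_inner_comm (g t) (b j)]
  -- c vanishes on head indices
  have hczero : ∀ j : Fin r, (j : ℕ) < k → c j = 0 := by
    intro j hj
    have haK : a j ∈ K := by
      apply Submodule.subset_span
      simp only [hKS, Finset.coe_image, Set.mem_image]
      exact ⟨j, by simp [hj], rfl⟩
    have := hexp (a j) haK
    rw [hcinner j]
    have hz : a j - ∑ t, ⟪a j, g t⟫ • g t = 0 := by
      nth_rewrite 1 [this]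
      apply sub_eq_zero_of_eq
      apply Finset.sum_congr rfl
      intro t _
      rw [real_inner_comm]
    rw [hz, inner_zero_left]
  -- c is bounded by the product of norms
  have hcle : ∀ j, c j ≤ ‖a j‖ * ‖b j‖ := by
    intro j
    rw [hcinner j]
    set q := a j - ∑ t, ⟪a j, g t⟫ • g t with hq
    have hql : ‖q‖ ≤ ‖a j‖ := by
      have hS : ‖∑ t, ⟪a j, g t⟫ • g t‖^2 = ∑ t, ⟪a j, g t⟫^2 := by
        rw [← real_inner_self_eq_norm_sq, sum_inner]
        simp only [real_inner_smul_left, inner_sum, real_inner_smul_right]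
        simp only [hgite, mul_ite, mul_one, mul_zero]
        rw [Finset.sum_comm]
        apply Finset.sum_congr rfl
        intro t _
        rw [Finset.sum_eq_single t] <;> simp [sq]
        · intro u hut; simp [hut]
      have hAS : ⟪a j, ∑ t, ⟪a j, g t⟫ • g t⟫ = ∑ t, ⟪a j, g t⟫^2 := by
        rw [inner_sum]
        simp only [real_inner_smul_right, sq]
      have hqs : ‖q‖^2 = ‖a j‖^2 - ∑ t, ⟪a j, g t⟫^2 := by
        rw [hq, norm_sub_sq_real, hAS, hS]; ring
      have h1 : (0:ℝ) ≤ ∑ t, ⟪a j, g t⟫^2 := Finset.sum_nonneg fun t _ => sq_nonneg _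
      nlinarith [norm_nonneg q, norm_nonneg (a j), hqs]
    calc ⟪q, b j⟫ ≤ ‖q‖ * ‖b j‖ := real_inner_le_norm q (b j)
      _ ≤ ‖a j‖ * ‖b j‖ := by
          apply mul_le_mul_of_nonneg_right hql (norm_nonneg _)
  -- Step A:  ∑ σ p ≤ tail of ‖a‖‖b‖
  have stepA : ∑ i, σ i * p i ≤
      ∑ j ∈ univ.filter (fun j : Fin r => k ≤ (j : ℕ)), ‖a j‖ * ‖b j‖ := by
    rw [keyp]
    have : ∑ j, c j = ∑ j ∈ univ.filter (fun j : Fin r => k ≤ (j : ℕ)), c j := by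
      symm
      apply Finset.sum_subset (Finset.subset_univ _)
      intro x _ hx
      simp only [Finset.mem_filter, Finset.mem_univ, true_and, not_le] at hx
      exact hczero x hx
    rw [this]
    exact Finset.sum_le_sum fun j _ => hcle j
  -- Step B:  tail of σ ≤ ∑ σ p
  have hpsum' : (s:ℝ) - k ≤ ∑ i, p i := by
    have : (d:ℝ) ≤ k := by exact_mod_cast hdk
    linarith [hpsum]
  have stepB := stepB_lemma σ p hσ0 hσm hp0 hp1 k hpsum'
  exact stepB.trans stepA

lemma weight_chain {s r : ℕ} (hsr : s ≤ r) (w : Fin r → ℝ) (hw : ∀ i, 0 < w i)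
    (hwm : Antitone w) (σ : Fin s → ℝ) (c : Fin r → ℝ)
    (htail : ∀ k : ℕ, ∑ i ∈ univ.filter (fun i : Fin s => k ≤ (i:ℕ)), σ i
      ≤ ∑ j ∈ univ.filter (fun j : Fin r => k ≤ (j:ℕ)), c j) :
    ∑ i, σ i / w (Fin.castLE hsr i) ≤ ∑ j, c j / w j := by
  classical
  -- cumulative weight function
  set f : ℕ → ℝ := fun t => if h : 0 < r then
      (if t = 0 then 0 else (w ⟨min (t-1) (r-1), by omega⟩)⁻¹) else 0 with hfdef
  set δ : ℕ → ℝ := fun k => f (k+1) - f k with hδ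
  have hf0 : f 0 = 0 := by simp [hfdef]
  have hfv : ∀ t : ℕ, (h : t < r) → f (t+1) = (w ⟨t, h⟩)⁻¹ := by
    intro t h
    have h0 : 0 < r := by omega
    have hmin : min (t+1-1) (r-1) = t := by omega
    simp only [hfdef, dif_pos h0, if_neg (Nat.succ_ne_zero t)]
    exact congrArg (fun x => (w x)⁻¹) (Fin.ext hmin)
  have htel : ∀ n : ℕ, ∑ k ∈ Finset.range n, δ k = f n := by
    intro n
    rw [hδ, Finset.sum_range_sub f, hf0, sub_zero]
  have hδ0 : ∀ k, 0 ≤ δ k := by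
    intro k
    rw [hδ]
    simp only [sub_nonneg]
    by_cases h0 : 0 < r
    · simp only [hfdef, dif_pos h0, if_neg (Nat.succ_ne_zero k)]
      by_cases hk0 : k = 0
      · subst hk0
        simp only [if_pos rfl]
        exact inv_nonneg.mpr (hw _).le
      · rw [if_neg hk0]
        apply inv_anti₀ (hw _)
        apply hwm
        rw [Fin.le_def]
        simp only []
        omega
    · simp only [hfdef, dif_neg h0, le_refl]
  have hexpand : ∀ (j : Fin r), (w j)⁻¹ = ∑ k ∈ Finset.range r, (if k ≤ (j:ℕ) then δ k else 0) := by
    intro j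
    have h1 : ∑ k ∈ Finset.range r, (if k ≤ (j:ℕ) then δ k else 0)
        = ∑ k ∈ Finset.range ((j:ℕ)+1), (if k ≤ (j:ℕ) then δ k else 0) := by
      symm
      apply Finset.sum_subset
      · apply Finset.range_subset_range.mpr
        have := j.2; omega
      · intro x _ hx
        rw [Finset.mem_range] at hx
        rw [if_neg (by omega : ¬ x ≤ (j:ℕ))]
    rw [h1]
    have h2 : ∑ k ∈ Finset.range ((j:ℕ)+1), (if k ≤ (j:ℕ) then δ k else 0)
        = ∑ k ∈ Finset.range ((j:ℕ)+1), δ k := by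
      apply Finset.sum_congr rfl
      intro x hx
      rw [Finset.mem_range] at hx
      rw [if_pos (by omega)]
    rw [h2, htel, hfv (j:ℕ) j.2]
  calc ∑ i, σ i / w (Fin.castLE hsr i)
      = ∑ k ∈ Finset.range r, δ k * ∑ i ∈ univ.filter (fun i : Fin s => k ≤ (i:ℕ)), σ i := by
        simp_rw [div_eq_mul_inv, hexpand, Finset.mul_sum, mul_ite, mul_zero]
        rw [Finset.sum_comm]
        apply Finset.sum_congr rfl
        intro k _
        symm
        rw [Finset.sum_filter]
        apply Finset.sum_congr rfl
        intro i _
        have : (Fin.castLE hsr i : ℕ) = (i : ℕ) := rfl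
        rw [this]
        split
        · ring
        · rfl
    _ ≤ ∑ k ∈ Finset.range r, δ k * ∑ j ∈ univ.filter (fun j : Fin r => k ≤ (j:ℕ)), c j := by
        apply Finset.sum_le_sum
        intro k _
        exact mul_le_mul_of_nonneg_left (htail k) (hδ0 k)
    _ = ∑ j, c j / w j := by
        symm
        simp_rw [div_eq_mul_inv, hexpand, Finset.mul_sum, mul_ite, mul_zero]
        rw [Finset.sum_comm]
        apply Finset.sum_congr rfl
        intro k _
        symm
        rw [Finset.sum_filter]
        apply Finset.sum_congr rfl
        intro j _
        split
        · ring
        · rfl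

lemma contract {m s : ℕ} (U : Matrix (Fin m) (Fin s) ℝ) (hU : Uᵀ * U = 1)
    (a : EuclideanSpace ℝ (Fin m)) (ta : EuclideanSpace ℝ (Fin s))
    (hta : ∀ i, ta i = ∑ q, U q i * a q) : ‖ta‖ ≤ ‖a‖ := by
  classical
  have hUU : ∀ i i' : Fin s, ∑ q, U q i * U q i' = if i = i' then (1:ℝ) else 0 := by
    intro i i'
    have h1 := congrFun (congrFun hU i) i'
    rw [Matrix.mul_apply, Matrix.one_apply] at h1
    simpa [Matrix.transpose_apply] using h1
  have key : ∀ x y : EuclideanSpace ℝ (Fin s),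
      ∑ q, (∑ i, U q i * x i) * (∑ i', U q i' * y i') = ∑ i, x i * y i := by
    intro x y
    calc ∑ q, (∑ i, U q i * x i) * (∑ i', U q i' * y i')
        = ∑ q, ∑ i, ∑ i', (U q i * x i) * (U q i' * y i') := by
          apply Finset.sum_congr rfl; intro q _
          rw [Finset.sum_mul_sum]
      _ = ∑ i, ∑ i', ∑ q, (U q i * x i) * (U q i' * y i') := by
          rw [Finset.sum_comm]
          apply Finset.sum_congr rfl; intro i _
          rw [Finset.sum_comm]
      _ = ∑ i, ∑ i', (∑ q, U q i * U q i') * (x i * y i') := by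
          apply Finset.sum_congr rfl; intro i _
          apply Finset.sum_congr rfl; intro i' _
          rw [Finset.sum_mul]
          apply Finset.sum_congr rfl; intro q _; ring
      _ = ∑ i, x i * y i := by
          apply Finset.sum_congr rfl; intro i _
          rw [Finset.sum_eq_single i]
          · rw [hUU]; simp
          · intro i' _ hii; rw [hUU, if_neg (Ne.symm hii), zero_mul]
          · simp
  set u : EuclideanSpace ℝ (Fin m) := WithLp.toLp 2 (fun q => ∑ i, U q i * ta i) with hu
  have e1 : ‖u‖^2 = ‖ta‖^2 := by
    rw [← real_inner_self_eq_norm_sq, ← real_inner_self_eq_norm_sq]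
    simp only [PiLp.inner_apply, RCLike.inner_apply, conj_trivial]
    exact key ta ta
  have e2 : ⟪a, u⟫ = ‖ta‖^2 := by
    rw [← real_inner_self_eq_norm_sq]
    simp only [PiLp.inner_apply, RCLike.inner_apply, conj_trivial, hu]
    rw [Finset.sum_congr rfl (fun q _ => mul_comm (∑ i, U q i * ta i) (a q))]
    calc ∑ q, a q * (∑ i, U q i * ta i)
        = ∑ q, ∑ i, (U q i * ta i) * a q := by
          apply Finset.sum_congr rfl; intro q _
          rw [Finset.mul_sum]
          apply Finset.sum_congr rfl; intro i _; ring
      _ = ∑ i, ∑ q, (U q i * ta i) * a q := Finset.sum_comm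
      _ = ∑ i, ta i * ta i := by
          apply Finset.sum_congr rfl; intro i _
          have h4 : ∑ q, (U q i * ta i) * a q = ta i * ∑ q, U q i * a q := by
            rw [Finset.mul_sum]
            apply Finset.sum_congr rfl; intro q _; ring
          rw [h4, ← hta i]
  have cauchy : ⟪a, u⟫ ≤ ‖a‖ * ‖u‖ := real_inner_le_norm a u
  have hnu : ‖u‖ = ‖ta‖ := by
    rw [← Real.sqrt_sq (norm_nonneg u), e1, Real.sqrt_sq (norm_nonneg ta)]
  rw [hnu, e2] at cauchy
  by_cases h0 : ‖ta‖ = 0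
  · rw [h0]; exact norm_nonneg a
  · have hpos : 0 < ‖ta‖ := lt_of_le_of_ne (norm_nonneg ta) (Ne.symm h0)
    rw [pow_two] at cauchy
    exact le_of_mul_le_mul_right cauchy hpos

lemma sum_fin_castLE {r s : ℕ} (hsr : s ≤ r) (F : Fin r → ℝ)
    (hF : ∀ j : Fin r, ¬ ((j:ℕ) < s) → F j = 0) :
    ∑ j, F j = ∑ i : Fin s, F (Fin.castLE hsr i) := by
  classical
  rw [← Finset.sum_image (s := (univ : Finset (Fin s))) (g := Fin.castLE hsr) (f := F)
    (fun x _ y _ h => Fin.castLE_injective hsr h)]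
  symm
  apply Finset.sum_subset (Finset.subset_univ _)
  intro x _ hx
  apply hF
  intro hlt
  apply hx
  rw [Finset.mem_image]
  exact ⟨⟨(x:ℕ), hlt⟩, Finset.mem_univ _, by apply Fin.ext; rfl⟩

/-- For `W = diag w` (`r × r`, nonincreasing positive) and `X` of rank `s ≤ r` with
reduced SVD `X = U (diag σ) Vᵀ` (`σ` nonincreasing positive), the minimum of
`(1/2)(‖A W⁻¹‖_F² + ‖B‖_F²)` over all factorizations `X = A Bᵀ` is attained
and equals `∑ᵢ σᵢ / Wᵢᵢ`. -/
theorem stmt8 {m n r s : ℕ}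
    (w : Fin r → ℝ) (hw_pos : ∀ i, 0 < w i) (hw_mono : Antitone w)
    (X : Matrix (Fin m) (Fin n) ℝ) (hrank : X.rank = s) (hsr : s ≤ r)
    (U : Matrix (Fin m) (Fin s) ℝ) (V : Matrix (Fin n) (Fin s) ℝ)
    (hU : Uᵀ * U = 1) (hV : Vᵀ * V = 1)
    (σ : Fin s → ℝ) (hσ_pos : ∀ i, 0 < σ i) (hσ_mono : Antitone σ)
    (hX : X = U * Matrix.diagonal σ * Vᵀ) :
    IsLeast { y : ℝ | ∃ (A : Matrix (Fin m) (Fin r) ℝ) (B : Matrix (Fin n) (Fin r) ℝ),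
        X = A * Bᵀ ∧ y = (1/2) * (frobSq (A * (Matrix.diagonal w)⁻¹) + frobSq B) }
      (∑ i, σ i / w (Fin.castLE hsr i)) := by
  classical
  have hUcol : ∀ j j' : Fin s, ∑ q, U q j * U q j' = if j = j' then (1:ℝ) else 0 := by
    intro j j'
    have h1 := congrFun (congrFun hU j) j'
    rw [Matrix.mul_apply, Matrix.one_apply] at h1
    simpa [Matrix.transpose_apply] using h1
  have hVcol : ∀ j j' : Fin s, ∑ q, V q j * V q j' = if j = j' then (1:ℝ) else 0 := by
    intro j j'
    have h1 := congrFun (congrFun hV j) j'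
    rw [Matrix.mul_apply, Matrix.one_apply] at h1
    simpa [Matrix.transpose_apply] using h1
  have hWinv : (Matrix.diagonal w)⁻¹ = Matrix.diagonal (fun j => (w j)⁻¹) := by
    apply Matrix.inv_eq_right_inv
    rw [Matrix.diagonal_mul_diagonal]
    have : (fun i => w i * (w i)⁻¹) = fun _ : Fin r => (1:ℝ) := by
      funext i
      exact mul_inv_cancel₀ (hw_pos i).ne'
    rw [this, Matrix.diagonal_one]
  -- frobSq of a matrix times inverse diagonal
  have hfrob : ∀ (A : Matrix (Fin m) (Fin r) ℝ),
      frobSq (A * (Matrix.diagonal w)⁻¹) = ∑ j, (∑ i, (A i j)^2) * ((w j)⁻¹)^2 := by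
    intro A
    rw [hWinv, frobSq]
    rw [Finset.sum_comm]
    apply Finset.sum_congr rfl
    intro j _
    rw [Finset.sum_mul]
    apply Finset.sum_congr rfl
    intro i _
    rw [Matrix.mul_diagonal]
    ring
  have hfrobB : ∀ (B : Matrix (Fin n) (Fin r) ℝ), frobSq B = ∑ j, ∑ i, (B i j)^2 := by
    intro B
    rw [frobSq, Finset.sum_comm]
  constructor
  · -- membership: the optimal factorization
    set A0 : Matrix (Fin m) (Fin r) ℝ := fun i j =>
      if h : (j:ℕ) < s then U i ⟨(j:ℕ), h⟩ * Real.sqrt (σ ⟨(j:ℕ), h⟩ * w j) else 0 with hA0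
    set B0 : Matrix (Fin n) (Fin r) ℝ := fun i j =>
      if h : (j:ℕ) < s then V i ⟨(j:ℕ), h⟩ * Real.sqrt (σ ⟨(j:ℕ), h⟩ / w j) else 0 with hB0
    have hA0app : ∀ (i : Fin m) (j' : Fin s),
        A0 i (Fin.castLE hsr j') = U i j' * Real.sqrt (σ j' * w (Fin.castLE hsr j')) := by
      intro i j'
      simp only [hA0]
      rw [dif_pos (show ((Fin.castLE hsr j' : Fin r) : ℕ) < s from j'.2)]
      rfl
    have hB0app : ∀ (i : Fin n) (j' : Fin s),
        B0 i (Fin.castLE hsr j') = V i j' * Real.sqrt (σ j' / w (Fin.castLE hsr j')) := by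
      intro i j'
      simp only [hB0]
      rw [dif_pos (show ((Fin.castLE hsr j' : Fin r) : ℕ) < s from j'.2)]
      rfl
    refine ⟨A0, B0, ?_, ?_⟩
    · -- X = A0 * B0ᵀ
      ext i p
      rw [Matrix.mul_apply]
      have hzero : ∀ j : Fin r, ¬((j:ℕ) < s) → A0 i j * B0ᵀ j p = 0 := by
        intro j hj
        simp [hA0, hB0, Matrix.transpose_apply, dif_neg hj]
      rw [sum_fin_castLE hsr _ hzero, hX, Matrix.mul_apply]
      apply Finset.sum_congr rfl
      intro j' _
      rw [Matrix.transpose_apply, Matrix.transpose_apply, hA0app, hB0app,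
        Matrix.mul_diagonal]
      have hsqrt : Real.sqrt (σ j' * w (Fin.castLE hsr j'))
          * Real.sqrt (σ j' / w (Fin.castLE hsr j')) = σ j' := by
        rw [← Real.sqrt_mul (mul_nonneg (hσ_pos j').le (hw_pos _).le)]
        have hw0 : w (Fin.castLE hsr j') ≠ 0 := (hw_pos _).ne'
        have hww : σ j' * w (Fin.castLE hsr j') * (σ j' / w (Fin.castLE hsr j'))
            = (σ j')^2 := by
          field_simp
        rw [hww, Real.sqrt_sq (hσ_pos j').le]
      calc U i j' * σ j' * V p j'
          = (σ j') * (U i j' * V p j') := by ring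
        _ = (Real.sqrt (σ j' * w (Fin.castLE hsr j'))
              * Real.sqrt (σ j' / w (Fin.castLE hsr j'))) * (U i j' * V p j') := by
            rw [hsqrt]
        _ = U i j' * Real.sqrt (σ j' * w (Fin.castLE hsr j'))
              * (V p j' * Real.sqrt (σ j' / w (Fin.castLE hsr j'))) := by ring
    · -- the value
      symm
      rw [hfrob A0, hfrobB B0]
      have hza : ∀ j : Fin r, ¬((j:ℕ) < s) → (∑ i, (A0 i j)^2) * ((w j)⁻¹)^2 = 0 := by
        intro j hj
        simp [hA0, dif_neg hj]
      have hzb : ∀ j : Fin r, ¬((j:ℕ) < s) → ∑ i, (B0 i j)^2 = 0 := by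
        intro j hj
        simp [hB0, dif_neg hj]
      rw [sum_fin_castLE hsr _ hza, sum_fin_castLE hsr _ hzb]
      have hUsq : ∀ j' : Fin s, ∑ i, (U i j')^2 = 1 := by
        intro j'
        have := hUcol j' j'
        rw [if_pos rfl] at this
        rw [← this]
        apply Finset.sum_congr rfl
        intro i _
        ring
      have hVsq : ∀ j' : Fin s, ∑ i, (V i j')^2 = 1 := by
        intro j'
        have := hVcol j' j'
        rw [if_pos rfl] at this
        rw [← this]
        apply Finset.sum_congr rfl
        intro i _
        ring
      have hea : ∀ j' : Fin s, (∑ i, (A0 i (Fin.castLE hsr j'))^2)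
          * ((w (Fin.castLE hsr j'))⁻¹)^2 = σ j' / w (Fin.castLE hsr j') := by
        intro j'
        have h1 : ∑ i, (A0 i (Fin.castLE hsr j'))^2
            = (σ j' * w (Fin.castLE hsr j')) * ∑ i, (U i j')^2 := by
          rw [Finset.mul_sum]
          apply Finset.sum_congr rfl
          intro i _
          rw [hA0app]
          rw [mul_pow, Real.sq_sqrt (mul_nonneg (hσ_pos j').le (hw_pos _).le)]
          ring
        rw [h1, hUsq, mul_one]
        have hwj := hw_pos (Fin.castLE hsr j')
        field_simp
      have heb : ∀ j' : Fin s, ∑ i, (B0 i (Fin.castLE hsr j'))^2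
          = σ j' / w (Fin.castLE hsr j') := by
        intro j'
        have h1 : ∑ i, (B0 i (Fin.castLE hsr j'))^2
            = (σ j' / w (Fin.castLE hsr j')) * ∑ i, (V i j')^2 := by
          rw [Finset.mul_sum]
          apply Finset.sum_congr rfl
          intro i _
          rw [hB0app]
          rw [mul_pow, Real.sq_sqrt (div_nonneg (hσ_pos j').le (hw_pos _).le)]
          ring
        rw [h1, hVsq, mul_one]
      simp_rw [hea, heb]
      ring
  · rintro y ⟨A, B, hAB, rfl⟩
    set ca : Fin r → EuclideanSpace ℝ (Fin m) := fun j => WithLp.toLp 2 (fun i => A i j) with hca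
    set cb : Fin r → EuclideanSpace ℝ (Fin n) := fun j => WithLp.toLp 2 (fun i => B i j) with hcb
    set ta : Fin r → EuclideanSpace ℝ (Fin s) := fun j => WithLp.toLp 2 (fun i => ∑ q, U q i * A q j) with hta
    set tb : Fin r → EuclideanSpace ℝ (Fin s) := fun j => WithLp.toLp 2 (fun i => ∑ q, V q i * B q j) with htb
    -- the diagonal identity
    have hDm : Matrix.diagonal σ = (Uᵀ * A) * (Bᵀ * V) := by
      have h1 : Uᵀ * X * V = Matrix.diagonal σ := by
        rw [hX]
        calc Uᵀ * (U * Matrix.diagonal σ * Vᵀ) * V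
            = (Uᵀ * U) * Matrix.diagonal σ * (Vᵀ * V) := by
              simp only [Matrix.mul_assoc]
          _ = Matrix.diagonal σ := by rw [hU, hV]; simp
      have h2 : Uᵀ * X * V = (Uᵀ * A) * (Bᵀ * V) := by
        rw [hAB]
        simp only [Matrix.mul_assoc]
      rw [← h1, h2]
    have hD : ∀ i p : Fin s, (if i = p then σ i else 0) = ∑ j, ta j i * tb j p := by
      intro i p
      have h1 := congrFun (congrFun hDm i) p
      rw [Matrix.diagonal_apply, Matrix.mul_apply] at h1
      rw [h1]
      apply Finset.sum_congr rfl
      intro j _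
      rw [Matrix.mul_apply, Matrix.mul_apply]
      simp only [Matrix.transpose_apply]
      congr 1
      apply Finset.sum_congr rfl
      intro q _
      ring
    -- norms of columns
    have hnca : ∀ j, ‖ca j‖^2 = ∑ i, (A i j)^2 := by
      intro j
      rw [EuclideanSpace.norm_sq_eq]
      simp [hca, Real.norm_eq_abs, sq_abs]
    have hncb : ∀ j, ‖cb j‖^2 = ∑ i, (B i j)^2 := by
      intro j
      rw [EuclideanSpace.norm_sq_eq]
      simp [hcb, Real.norm_eq_abs, sq_abs]
    have hconA : ∀ j, ‖ta j‖ ≤ ‖ca j‖ := by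
      intro j
      exact contract U hU (ca j) (ta j) (fun i => rfl)
    have hconB : ∀ j, ‖tb j‖ ≤ ‖cb j‖ := by
      intro j
      exact contract V hV (cb j) (tb j) (fun i => rfl)
    have step1 : ∑ i, σ i / w (Fin.castLE hsr i) ≤ ∑ j, (‖ta j‖ * ‖tb j‖) / w j := by
      apply weight_chain hsr w hw_pos hw_mono
      intro k
      exact tail_ineq σ (fun i => (hσ_pos i).le) hσ_mono ta tb hD k
    have step2 : ∑ j, (‖ta j‖ * ‖tb j‖) / w j ≤ ∑ j, (‖ca j‖ * ‖cb j‖) / w j := by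
      apply Finset.sum_le_sum
      intro j _
      rw [div_eq_mul_inv, div_eq_mul_inv]
      exact mul_le_mul_of_nonneg_right
        (mul_le_mul (hconA j) (hconB j) (norm_nonneg _) (norm_nonneg _))
        (inv_nonneg.mpr (hw_pos j).le)
    have step3 : ∑ j, (‖ca j‖ * ‖cb j‖) / w j
        ≤ ∑ j, (1/2) * (‖ca j‖^2 * ((w j)⁻¹)^2 + ‖cb j‖^2) := by
      apply Finset.sum_le_sum
      intro j _
      have hwj := hw_pos j
      have h1 : (‖ca j‖ * ‖cb j‖) / w j = (‖ca j‖ * (w j)⁻¹) * ‖cb j‖ := by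
        rw [div_eq_mul_inv]
        ring
      rw [h1]
      nlinarith [sq_nonneg (‖ca j‖ * (w j)⁻¹ - ‖cb j‖)]
    have step4 : ∑ j, (1/2) * (‖ca j‖^2 * ((w j)⁻¹)^2 + ‖cb j‖^2)
        = (1/2) * (frobSq (A * (Matrix.diagonal w)⁻¹) + frobSq B) := by
      rw [hfrob A, hfrobB B]
      rw [← Finset.mul_sum, ← Finset.sum_add_distrib]
      congr 1
      apply Finset.sum_congr rfl
      intro j _
      rw [hnca j, hncb j]
    calc ∑ i, σ i / w (Fin.castLE hsr i) ≤ ∑ j, (‖ta j‖ * ‖tb j‖) / w j := step1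
      _ ≤ ∑ j, (‖ca j‖ * ‖cb j‖) / w j := step2
      _ ≤ ∑ j, (1/2) * (‖ca j‖^2 * ((w j)⁻¹)^2 + ‖cb j‖^2) := step3
      _ = (1/2) * (frobSq (A * (Matrix.diagonal w)⁻¹) + frobSq B) := step4
end

section
/- Let W ∈ ℝ^{r×r} be diagonal with W₁₁ ≥ W₂₂ ≥ ⋯ ≥ W_{rr} > 0, let X ∈ ℝ^{m×n} have rank s with s ≤ r, and let X = U·Σ_X·Vᵀ be a reduced singular value decomposition, where U ∈ ℝ^{m×s} and V ∈ ℝ^{n×s} have orthonormal columns and Σ_X = diag(σ₁, …, σ_s) with σ₁ ≥ ⋯ ≥ σ_s > 0. Let W_X = diag(W₁₁, …, W_{ss}), and define Ã = [U·Σ_X^{1/2}·W_X^{1/2} , 0] ∈ ℝ^{m×r} and B̃ = [V·Σ_X^{1/2}·W_X^{-1/2} , 0] ∈ ℝ^{n×r} (padding with zero columns). Then Ã·B̃ᵀ = X and (1/2)(‖Ã·W^{-1}‖_F² + ‖B̃‖_F²) = Σ_{i=1}^{s} σ_i / W_{ii}. -/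
open Matrix

def padCols {m s r : ℕ} (h : s ≤ r) (M : Matrix (Fin m) (Fin s) ℝ) :
    Matrix (Fin m) (Fin r) ℝ :=
  Matrix.of fun i j => if hj : (j : ℕ) < s then M i ⟨j, hj⟩ else 0

lemma sum_castLE {s r : ℕ} (hsr : s ≤ r) (g : Fin r → ℝ)
    (hg : ∀ j : Fin r, s ≤ (j : ℕ) → g j = 0) :
    ∑ j, g j = ∑ k : Fin s, g (Fin.castLE hsr k) := by
  classical
  have h1 : ∑ j : Fin r, g j
      = ∑ j ∈ Finset.univ.filter (fun j : Fin r => (j : ℕ) < s), g j := by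
    rw [Finset.sum_filter]
    refine Finset.sum_congr rfl fun j _ => ?_
    by_cases h : (j : ℕ) < s
    · simp [h]
    · simp [h, hg j (le_of_not_gt h)]
  have h2 : Finset.univ.filter (fun j : Fin r => (j : ℕ) < s)
      = Finset.univ.image (Fin.castLE hsr) := by
    ext j
    simp only [Finset.mem_filter, Finset.mem_univ, true_and, Finset.mem_image]
    constructor
    · intro h; exact ⟨⟨j, h⟩, rfl⟩
    · rintro ⟨k, rfl⟩; exact k.isLt
  rw [h1, h2, Finset.sum_image (fun a _ b _ h => Fin.castLE_injective hsr h)]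

lemma padCols_castLE {m s r : ℕ} (hsr : s ≤ r) (M : Matrix (Fin m) (Fin s) ℝ)
    (i : Fin m) (k : Fin s) : padCols hsr M i (Fin.castLE hsr k) = M i k := by
  simp [padCols]

lemma padCols_zero {m s r : ℕ} (hsr : s ≤ r) (M : Matrix (Fin m) (Fin s) ℝ)
    (i : Fin m) (j : Fin r) (hj : s ≤ (j : ℕ)) : padCols hsr M i j = 0 := by
  simp [padCols, Nat.not_lt.2 hj]

/-- With `Ã = [U Σ_X^{1/2} W_X^{1/2}, 0]` and `B̃ = [V Σ_X^{1/2} W_X^{-1/2}, 0]`,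
one has `Ã B̃ᵀ = X` and `(1/2)(‖Ã W⁻¹‖_F² + ‖B̃‖_F²) = ∑ᵢ σᵢ / Wᵢᵢ`. -/
theorem stmt12 {m n r s : ℕ}
    (w : Fin r → ℝ) (hw_pos : ∀ i, 0 < w i) (hw_mono : Antitone w)
    (X : Matrix (Fin m) (Fin n) ℝ) (hrank : X.rank = s) (hsr : s ≤ r)
    (U : Matrix (Fin m) (Fin s) ℝ) (V : Matrix (Fin n) (Fin s) ℝ)
    (hU : Uᵀ * U = 1) (hV : Vᵀ * V = 1)
    (σ : Fin s → ℝ) (hσ_pos : ∀ i, 0 < σ i) (hσ_mono : Antitone σ)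
    (hX : X = U * Matrix.diagonal σ * Vᵀ) :
    (padCols hsr (U * Matrix.diagonal
        (fun k => Real.sqrt (σ k) * Real.sqrt (w (Fin.castLE hsr k)))) *
      (padCols hsr (V * Matrix.diagonal
        (fun k => Real.sqrt (σ k) * (Real.sqrt (w (Fin.castLE hsr k)))⁻¹)))ᵀ = X) ∧
    (1/2) * (frobSq (padCols hsr (U * Matrix.diagonal
        (fun k => Real.sqrt (σ k) * Real.sqrt (w (Fin.castLE hsr k)))) *
          (Matrix.diagonal w)⁻¹) +
      frobSq (padCols hsr (V * Matrix.diagonal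
        (fun k => Real.sqrt (σ k) * (Real.sqrt (w (Fin.castLE hsr k)))⁻¹)))) =
      ∑ i, σ i / w (Fin.castLE hsr i) := by
  have hwne : ∀ j, w j ≠ 0 := fun j => (hw_pos j).ne'
  have hsqw : ∀ k : Fin s, Real.sqrt (w (Fin.castLE hsr k)) ≠ 0 :=
    fun k => Real.sqrt_ne_zero'.2 (hw_pos _)
  have hUcol : ∀ k : Fin s, ∑ i, U i k ^ 2 = 1 := by
    intro k
    have := congrFun (congrFun hU k) k
    simpa [Matrix.mul_apply, Matrix.one_apply, pow_two] using this
  have hVcol : ∀ k : Fin s, ∑ i, V i k ^ 2 = 1 := by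
    intro k
    have := congrFun (congrFun hV k) k
    simpa [Matrix.mul_apply, Matrix.one_apply, pow_two] using this
  set da := fun k : Fin s => Real.sqrt (σ k) * Real.sqrt (w (Fin.castLE hsr k)) with hda
  set db := fun k : Fin s => Real.sqrt (σ k) * (Real.sqrt (w (Fin.castLE hsr k)))⁻¹ with hdb
  have hdadb : ∀ k : Fin s, da k * db k = σ k := by
    intro k
    have h1 : Real.sqrt (σ k) * Real.sqrt (σ k) = σ k :=
      Real.mul_self_sqrt (hσ_pos k).le
    calc da k * db k
        = (Real.sqrt (σ k) * Real.sqrt (σ k)) *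
          (Real.sqrt (w (Fin.castLE hsr k)) * (Real.sqrt (w (Fin.castLE hsr k)))⁻¹) := by
          rw [hda, hdb]; ring
      _ = σ k := by rw [mul_inv_cancel₀ (hsqw k), h1, mul_one]
  have hda2 : ∀ k : Fin s, da k ^ 2 = σ k * w (Fin.castLE hsr k) := by
    intro k
    rw [hda]
    rw [mul_pow, Real.sq_sqrt (hσ_pos k).le, Real.sq_sqrt (hw_pos _).le]
  have hdb2 : ∀ k : Fin s, db k ^ 2 = σ k / w (Fin.castLE hsr k) := by
    intro k
    rw [hdb]
    rw [mul_pow, Real.sq_sqrt (hσ_pos k).le, inv_pow, Real.sq_sqrt (hw_pos _).le,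
      div_eq_mul_inv]
  constructor
  · ext i j
    rw [Matrix.mul_apply]
    rw [sum_castLE hsr _ (fun kk hk => by
      simp [Matrix.transpose_apply, padCols_zero hsr _ _ _ hk])]
    rw [hX]
    rw [Matrix.mul_apply]
    refine Finset.sum_congr rfl fun k _ => ?_
    simp only [Matrix.transpose_apply, padCols_castLE, Matrix.mul_diagonal]
    rw [← hdadb k]
    ring
  · have hinv : (Matrix.diagonal w)⁻¹ = Matrix.diagonal (fun j => (w j)⁻¹) := by
      apply Matrix.inv_eq_right_inv
      rw [Matrix.diagonal_mul_diagonal]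
      have : (fun j => w j * (w j)⁻¹) = fun _ => (1 : ℝ) :=
        funext fun j => mul_inv_cancel₀ (hwne j)
      rw [this, Matrix.diagonal_one]
    have hF1 : frobSq (padCols hsr (U * Matrix.diagonal da) * (Matrix.diagonal w)⁻¹)
        = ∑ k : Fin s, σ k / w (Fin.castLE hsr k) := by
      rw [hinv]
      unfold frobSq
      rw [Finset.sum_comm]
      rw [sum_castLE hsr _ (fun kk hk => by
        simp [Matrix.mul_diagonal, padCols_zero hsr _ _ _ hk])]
      refine Finset.sum_congr rfl fun k _ => ?_
      have : ∀ i, (padCols hsr (U * Matrix.diagonal da) * Matrix.diagonal fun j => (w j)⁻¹)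
          i (Fin.castLE hsr k) ^ 2
          = U i k ^ 2 * (da k ^ 2 * ((w (Fin.castLE hsr k))⁻¹) ^ 2) := by
        intro i
        rw [Matrix.mul_diagonal, padCols_castLE, Matrix.mul_diagonal]
        ring
      rw [Finset.sum_congr rfl fun i _ => this i, ← Finset.sum_mul, hUcol, one_mul,
        hda2, div_eq_mul_inv, pow_two]
      have hw := hwne (Fin.castLE hsr k)
      field_simp
    have hF2 : frobSq (padCols hsr (V * Matrix.diagonal db))
        = ∑ k : Fin s, σ k / w (Fin.castLE hsr k) := by
      unfold frobSq
      rw [Finset.sum_comm]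
      rw [sum_castLE hsr _ (fun kk hk => by
        simp [padCols_zero hsr _ _ _ hk])]
      refine Finset.sum_congr rfl fun k _ => ?_
      have : ∀ i, (padCols hsr (V * Matrix.diagonal db)) i (Fin.castLE hsr k) ^ 2
          = V i k ^ 2 * db k ^ 2 := by
        intro i
        rw [padCols_castLE, Matrix.mul_diagonal]
        ring
      rw [Finset.sum_congr rfl fun i _ => this i, ← Finset.sum_mul, hVcol, one_mul, hdb2]
    rw [hF1, hF2]
    ring
end

section
/- Let W ∈ ℝ^{r×r} be diagonal with W₁₁ ≥ W₂₂ ≥ ⋯ ≥ W_{rr} > 0, let X ∈ ℝ^{m×n} have rank s with s ≤ r, and let X = U·Σ_X·Vᵀ be a reduced singular value decomposition, where U ∈ ℝ^{m×s} and V ∈ ℝ^{n×s} have orthonormal columns and Σ_X = diag(σ₁, …, σ_s) with σ₁ ≥ ⋯ ≥ σ_s > 0. Let W_X = diag(W₁₁, …, W_{ss}), and define Â = [U·Σ_X^{1/3}·W_X^{2/3} , 0] ∈ ℝ^{m×r} and B̂ = [V·Σ_X^{2/3}·W_X^{-2/3} , 0] ∈ ℝ^{n×r} (padding with zero columns). Then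 Â·B̂ᵀ = X and (1/3)(‖Â·W^{-1}‖_F² + 2‖B̂‖_*) = Σ_{i=1}^{s} (σ_i / W_{ii})^{2/3}. -/
open Matrix

/-- The singular values of a real `m × n` matrix, indexed by the columns:
the square roots of the eigenvalues of `Aᵀ * A`. -/
noncomputable def singularValues {m n : ℕ} (A : Matrix (Fin m) (Fin n) ℝ) : Fin n → ℝ :=
  fun i => Real.sqrt ((Matrix.isHermitian_conjTranspose_mul_self A).eigenvalues i)

/-- The nuclear norm: the sum of the singular values. -/
noncomputable def nuclearNorm {m n : ℕ} (A : Matrix (Fin m) (Fin n) ℝ) : ℝ :=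
  ∑ j, singularValues A j

section Aux

open Polynomial

lemma my_charpoly_conj {r : ℕ} (P Q M : Matrix (Fin r) (Fin r) ℝ) (hPQ : P * Q = 1) :
    (P * M * Q).charpoly = M.charpoly := by
  have key : charmatrix (P * M * Q) =
      (C : ℝ →+* ℝ[X]).mapMatrix P * charmatrix M * (C : ℝ →+* ℝ[X]).mapMatrix Q := by
    unfold charmatrix
    rw [mul_sub, sub_mul, _root_.map_mul, _root_.map_mul]
    congr 1
    have h1 : ((C : ℝ →+* ℝ[X]).mapMatrix P) * ((C : ℝ →+* ℝ[X]).mapMatrix Q) = 1 := by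
      rw [← _root_.map_mul, hPQ, _root_.map_one]
    have h2 : Matrix.scalar (Fin r) (X : ℝ[X]) = (X : ℝ[X]) • (1 : Matrix (Fin r) (Fin r) ℝ[X]) := by
      simp [Matrix.scalar]
      ext i j
      by_cases h : i = j <;> simp [h, Matrix.diagonal_apply, Matrix.one_apply]
    rw [h2, mul_smul_comm, smul_mul_assoc, mul_one, h1]
  have hQP : det ((C : ℝ →+* ℝ[X]).mapMatrix P) * det ((C : ℝ →+* ℝ[X]).mapMatrix Q) = 1 := by
    rw [← det_mul, ← _root_.map_mul, hPQ, _root_.map_one, det_one]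
  rw [Matrix.charpoly, key, det_mul, det_mul, Matrix.charpoly]
  calc det ((C : ℝ →+* ℝ[X]).mapMatrix P) * det (charmatrix M) * det ((C : ℝ →+* ℝ[X]).mapMatrix Q)
      = det (charmatrix M) *
        (det ((C : ℝ →+* ℝ[X]).mapMatrix P) * det ((C : ℝ →+* ℝ[X]).mapMatrix Q)) := by ring
    _ = det (charmatrix M) := by rw [hQP, mul_one]

lemma my_charpoly_diagonal {r : ℕ} (d : Fin r → ℝ) :
    (Matrix.diagonal d).charpoly = ∏ i, (X - C (d i)) := by
  rw [Matrix.charpoly_of_upperTriangular _ (Matrix.blockTriangular_diagonal d)]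
  simp

lemma my_multiset_eq {r : ℕ} (a b : Fin r → ℝ)
    (h : ∏ i, (X - C (a i)) = ∏ i, (X - C (b i))) :
    Multiset.map a Finset.univ.val = Multiset.map b Finset.univ.val := by
  have ha : (∏ i, (X - C (a i))).roots = Multiset.map a Finset.univ.val := by
    rw [Finset.prod_eq_multiset_prod]
    have h' : Multiset.map (fun i => X - C (a i)) Finset.univ.val =
        Multiset.map (fun x => X - C x) (Multiset.map a Finset.univ.val) := by
      rw [Multiset.map_map]; rfl
    rw [h', roots_multiset_prod_X_sub_C]
  have hb : (∏ i, (X - C (b i))).roots = Multiset.map b Finset.univ.val := by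
    rw [Finset.prod_eq_multiset_prod]
    have h' : Multiset.map (fun i => X - C (b i)) Finset.univ.val =
        Multiset.map (fun x => X - C x) (Multiset.map b Finset.univ.val) := by
      rw [Multiset.map_map]; rfl
    rw [h', roots_multiset_prod_X_sub_C]
  rw [← ha, ← hb, h]

lemma my_sum_sqrt_eig {r : ℕ} {A : Matrix (Fin r) (Fin r) ℝ} (hA : A.IsHermitian)
    (d : Fin r → ℝ) (hAd : A = Matrix.diagonal d) :
    ∑ j, Real.sqrt (hA.eigenvalues j) = ∑ j, Real.sqrt (d j) := by
  have hspec := hA.spectral_theorem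
  have hdiag : Matrix.diagonal (RCLike.ofReal ∘ hA.eigenvalues) =
      Matrix.diagonal hA.eigenvalues := by
    congr 1
  have hU : (Matrix.IsHermitian.eigenvectorUnitary hA : Matrix (Fin r) (Fin r) ℝ) *
      (star (Matrix.IsHermitian.eigenvectorUnitary hA : Matrix (Fin r) (Fin r) ℝ)) = 1 :=
    (Unitary.mem_iff.mp (Matrix.IsHermitian.eigenvectorUnitary hA).2).2
  have hcp : A.charpoly = (Matrix.diagonal hA.eigenvalues).charpoly := by
    conv_lhs => rw [hspec, hdiag]
    exact my_charpoly_conj _ _ _ hU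
  have h2 : ∏ i, (X - C (d i)) = ∏ i, (X - C (hA.eigenvalues i)) := by
    rw [← my_charpoly_diagonal, ← my_charpoly_diagonal, ← hcp, hAd]
  have h3 := my_multiset_eq d hA.eigenvalues h2
  have h4 : ∀ f : Fin r → ℝ, ∑ j, Real.sqrt (f j) =
      ((Multiset.map f Finset.univ.val).map Real.sqrt).sum := by
    intro f
    rw [Multiset.map_map, Finset.sum_eq_multiset_sum]
    rfl
  rw [h4, h4, h3]

lemma my_sum_pad {s r : ℕ} (hsr : s ≤ r) (F : Fin s → ℝ) :
    ∑ j : Fin r, (if hj : (j : ℕ) < s then F ⟨j, hj⟩ else 0) = ∑ k : Fin s, F k := by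
  have h1 : ∑ j ∈ Finset.univ.map (Fin.castLEEmb hsr),
      (if hj : (j : ℕ) < s then F ⟨j, hj⟩ else 0) = ∑ k : Fin s, F k := by
    rw [Finset.sum_map]
    apply Finset.sum_congr rfl
    intro k _
    have hk : ((Fin.castLEEmb hsr k : Fin r) : ℕ) < s := by simpa using k.2
    have he : (⟨((Fin.castLEEmb hsr k : Fin r) : ℕ), hk⟩ : Fin s) = k := Fin.ext (by simp)
    rw [dif_pos hk, he]
  rw [← h1]
  symm
  apply Finset.sum_subset (Finset.subset_univ _)
  intro j _ hj
  rw [dif_neg]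
  intro hjs
  exact hj (Finset.mem_map.mpr ⟨⟨j, hjs⟩, Finset.mem_univ _, by simp [Fin.castLEEmb]⟩)

lemma my_pad_mul_pad_transpose {m n s r : ℕ} (hsr : s ≤ r)
    (A : Matrix (Fin m) (Fin s) ℝ) (B : Matrix (Fin n) (Fin s) ℝ) :
    padCols hsr A * (padCols hsr B)ᵀ = A * Bᵀ := by
  ext i j
  simp only [Matrix.mul_apply, Matrix.transpose_apply, padCols, Matrix.of_apply]
  rw [← my_sum_pad hsr (fun k => A i k * B j k)]
  apply Finset.sum_congr rfl
  intro k _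
  by_cases hk : (k : ℕ) < s <;> simp [hk]

lemma my_pad_transpose_mul_pad {n s r : ℕ} (hsr : s ≤ r)
    (V : Matrix (Fin n) (Fin s) ℝ) (b : Fin s → ℝ) (hV : Vᵀ * V = 1) :
    (padCols hsr (V * Matrix.diagonal b))ᵀ * padCols hsr (V * Matrix.diagonal b) =
      Matrix.diagonal (fun j : Fin r => if hj : (j : ℕ) < s then (b ⟨j, hj⟩) ^ 2 else 0) := by
  ext j j'
  rw [Matrix.mul_apply]
  simp only [Matrix.transpose_apply, padCols, Matrix.of_apply]
  by_cases hj : (j : ℕ) < s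
  · by_cases hj' : (j' : ℕ) < s
    · simp only [dif_pos hj, dif_pos hj', Matrix.mul_diagonal]
      have key : ∑ i, V i ⟨j, hj⟩ * b ⟨j, hj⟩ * (V i ⟨j', hj'⟩ * b ⟨j', hj'⟩) =
          (Vᵀ * V) ⟨j, hj⟩ ⟨j', hj'⟩ * (b ⟨j, hj⟩ * b ⟨j', hj'⟩) := by
        rw [Matrix.mul_apply, Finset.sum_mul]
        apply Finset.sum_congr rfl
        intro i _
        simp only [Matrix.transpose_apply]; ring
      rw [key, hV]
      by_cases hjj : j = j'
      · subst hjj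
        simp [Matrix.one_apply, Matrix.diagonal_apply, hj, sq]
      · have hne : (⟨(j:ℕ), hj⟩ : Fin s) ≠ ⟨(j':ℕ), hj'⟩ := by
          intro hcon
          have hv : ((⟨(j:ℕ), hj⟩ : Fin s) : ℕ) = ((⟨(j':ℕ), hj'⟩ : Fin s) : ℕ) :=
            congrArg Fin.val hcon
          exact hjj (Fin.ext hv)
        simp [Matrix.one_apply, Matrix.diagonal_apply, hne, hjj]
    · have hne : j ≠ j' := fun h => hj' (h ▸ hj)
      simp [hj, hj', Matrix.diagonal_apply, hne]
  · by_cases hjj : j = j'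
    · subst hjj; simp [hj, Matrix.diagonal_apply]
    · simp [hj, Matrix.diagonal_apply, hjj]

lemma my_nuclear {n s r : ℕ} (hsr : s ≤ r)
    (V : Matrix (Fin n) (Fin s) ℝ) (b : Fin s → ℝ) (hV : Vᵀ * V = 1) (hb : ∀ k, 0 ≤ b k) :
    nuclearNorm (padCols hsr (V * Matrix.diagonal b)) = ∑ k : Fin s, b k := by
  unfold nuclearNorm singularValues
  rw [my_sum_sqrt_eig (Matrix.isHermitian_conjTranspose_mul_self _)
    (fun j : Fin r => if hj : (j : ℕ) < s then (b ⟨j, hj⟩) ^ 2 else 0)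
    (by rw [Matrix.conjTranspose_eq_transpose_of_trivial]; exact my_pad_transpose_mul_pad hsr V b hV)]
  have h1 : ∀ j : Fin r, Real.sqrt (if hj : (j : ℕ) < s then (b ⟨j, hj⟩) ^ 2 else 0) =
      (if hj : (j : ℕ) < s then b ⟨j, hj⟩ else 0) := by
    intro j
    by_cases hj : (j : ℕ) < s
    · rw [dif_pos hj, dif_pos hj, Real.sqrt_sq (hb _)]
    · rw [dif_neg hj, dif_neg hj, Real.sqrt_zero]
  rw [Finset.sum_congr rfl (fun j _ => h1 j), my_sum_pad hsr b]

lemma my_frobSq {m s r : ℕ} (hsr : s ≤ r)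
    (U : Matrix (Fin m) (Fin s) ℝ) (a : Fin s → ℝ) (w : Fin r → ℝ)
    (hw : ∀ i, w i ≠ 0) (hU : Uᵀ * U = 1) :
    frobSq (padCols hsr (U * Matrix.diagonal a) * (Matrix.diagonal w)⁻¹) =
      ∑ k : Fin s, (a k * (w (Fin.castLE hsr k))⁻¹) ^ 2 := by
  have hinv : (Matrix.diagonal w)⁻¹ = Matrix.diagonal (fun i => (w i)⁻¹) := by
    apply Matrix.inv_eq_right_inv
    rw [Matrix.diagonal_mul_diagonal]
    have h' : (fun i => w i * (w i)⁻¹) = fun _ => (1 : ℝ) :=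
      funext fun i => mul_inv_cancel₀ (hw i)
    rw [h', Matrix.diagonal_one]
  have hcol : ∀ j : Fin r,
      ∑ i, ((padCols hsr (U * Matrix.diagonal a) * (Matrix.diagonal w)⁻¹) i j) ^ 2 =
      (if hj : (j : ℕ) < s then (a ⟨j, hj⟩ * (w (Fin.castLE hsr ⟨j, hj⟩))⁻¹) ^ 2 else 0) := by
    intro j
    by_cases hj : (j : ℕ) < s
    · simp only [hinv, Matrix.mul_diagonal, padCols, Matrix.of_apply, dif_pos hj]
      have key : ∑ i, (U i ⟨j, hj⟩ * a ⟨j, hj⟩ * (w j)⁻¹) ^ 2 =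
          ((Uᵀ * U) ⟨j, hj⟩ ⟨j, hj⟩) * (a ⟨j, hj⟩ * (w j)⁻¹) ^ 2 := by
        rw [Matrix.mul_apply, Finset.sum_mul]
        apply Finset.sum_congr rfl
        intro i _
        simp only [Matrix.transpose_apply]; ring
      rw [key, hU]
      have hc : Fin.castLE hsr ⟨(j : ℕ), hj⟩ = j := rfl
      simp [Matrix.one_apply, hc]
    · simp [hinv, Matrix.mul_diagonal, padCols, dif_neg hj]
  unfold frobSq
  rw [Finset.sum_comm, Finset.sum_congr rfl (fun j _ => hcol j),
    my_sum_pad hsr (fun k => (a k * (w (Fin.castLE hsr k))⁻¹) ^ 2)]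

end Aux

/-- With `Â = [U Σ_X^{1/3} W_X^{2/3}, 0]` and `B̂ = [V Σ_X^{2/3} W_X^{-2/3}, 0]`,
one has `Â B̂ᵀ = X` and `(1/3)(‖Â W⁻¹‖_F² + 2‖B̂‖_*) = ∑ᵢ (σᵢ / Wᵢᵢ)^{2/3}`. -/
theorem stmt13 {m n r s : ℕ}
    (w : Fin r → ℝ) (hw_pos : ∀ i, 0 < w i) (hw_mono : Antitone w)
    (X : Matrix (Fin m) (Fin n) ℝ) (hrank : X.rank = s) (hsr : s ≤ r)
    (U : Matrix (Fin m) (Fin s) ℝ) (V : Matrix (Fin n) (Fin s) ℝ)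
    (hU : Uᵀ * U = 1) (hV : Vᵀ * V = 1)
    (σ : Fin s → ℝ) (hσ_pos : ∀ i, 0 < σ i) (hσ_mono : Antitone σ)
    (hX : X = U * Matrix.diagonal σ * Vᵀ) :
    (padCols hsr (U * Matrix.diagonal
        (fun k => σ k ^ ((1 : ℝ)/3) * w (Fin.castLE hsr k) ^ ((2 : ℝ)/3))) *
      (padCols hsr (V * Matrix.diagonal
        (fun k => σ k ^ ((2 : ℝ)/3) * (w (Fin.castLE hsr k) ^ ((2 : ℝ)/3))⁻¹)))ᵀ = X) ∧
    (1/3) * (frobSq (padCols hsr (U * Matrix.diagonal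
        (fun k => σ k ^ ((1 : ℝ)/3) * w (Fin.castLE hsr k) ^ ((2 : ℝ)/3))) *
          (Matrix.diagonal w)⁻¹) +
      2 * nuclearNorm (padCols hsr (V * Matrix.diagonal
        (fun k => σ k ^ ((2 : ℝ)/3) * (w (Fin.castLE hsr k) ^ ((2 : ℝ)/3))⁻¹)))) =
      ∑ i, (σ i / w (Fin.castLE hsr i)) ^ ((2 : ℝ)/3) := by
  set a : Fin s → ℝ := fun k => σ k ^ ((1 : ℝ)/3) * w (Fin.castLE hsr k) ^ ((2 : ℝ)/3) with ha
  set b : Fin s → ℝ := fun k => σ k ^ ((2 : ℝ)/3) * (w (Fin.castLE hsr k) ^ ((2 : ℝ)/3))⁻¹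
    with hb
  have hbnn : ∀ k, 0 ≤ b k := by
    intro k
    exact le_of_lt (mul_pos (Real.rpow_pos_of_pos (hσ_pos k) _)
      (inv_pos.mpr (Real.rpow_pos_of_pos (hw_pos _) _)))
  constructor
  · rw [my_pad_mul_pad_transpose hsr, Matrix.transpose_mul, Matrix.diagonal_transpose, hX,
      ← Matrix.mul_assoc, Matrix.mul_assoc U, Matrix.diagonal_mul_diagonal]
    have hab : (fun k => a k * b k) = σ := by
      funext k
      have h1 : σ k ^ ((1 : ℝ)/3) * σ k ^ ((2 : ℝ)/3) = σ k := by
        rw [← Real.rpow_add (hσ_pos k)]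
        norm_num
      have h2 : w (Fin.castLE hsr k) ^ ((2 : ℝ)/3) *
          (w (Fin.castLE hsr k) ^ ((2 : ℝ)/3))⁻¹ = 1 :=
        mul_inv_cancel₀ (ne_of_gt (Real.rpow_pos_of_pos (hw_pos _) _))
      calc a k * b k = (σ k ^ ((1 : ℝ)/3) * σ k ^ ((2 : ℝ)/3)) *
            (w (Fin.castLE hsr k) ^ ((2 : ℝ)/3) * (w (Fin.castLE hsr k) ^ ((2 : ℝ)/3))⁻¹) := by
              rw [ha, hb]; ring
        _ = σ k := by rw [h1, h2, mul_one]
    rw [hab]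
  · rw [my_frobSq hsr U a w (fun i => (hw_pos i).ne') hU, my_nuclear hsr V b hV hbnn]
    have hterm2 : ∀ k : Fin s, b k = (σ k / w (Fin.castLE hsr k)) ^ ((2 : ℝ)/3) := by
      intro k
      rw [Real.div_rpow (hσ_pos k).le (hw_pos _).le, div_eq_mul_inv]
    have hterm1 : ∀ k : Fin s, (a k * (w (Fin.castLE hsr k))⁻¹) ^ 2 =
        (σ k / w (Fin.castLE hsr k)) ^ ((2 : ℝ)/3) := by
      intro k
      set p := σ k with hp'
      set q := w (Fin.castLE hsr k) with hq'
      have hp : (0:ℝ) < p := hσ_pos k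
      have hq : (0:ℝ) < q := hw_pos _
      have e1 : (p ^ ((1:ℝ)/3)) ^ (2:ℕ) = p ^ ((2:ℝ)/3) := by
        rw [← Real.rpow_natCast (p ^ ((1:ℝ)/3)) 2, ← Real.rpow_mul hp.le]
        norm_num
      have e2 : (q ^ ((2:ℝ)/3)) ^ (2:ℕ) = q ^ ((4:ℝ)/3) := by
        rw [← Real.rpow_natCast (q ^ ((2:ℝ)/3)) 2, ← Real.rpow_mul hq.le]
        norm_num
      have e3 : (q⁻¹) ^ (2:ℕ) = (q ^ (2:ℕ))⁻¹ := inv_pow q 2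
      have e4 : q ^ ((4:ℝ)/3) * (q ^ (2:ℕ))⁻¹ = (q ^ ((2:ℝ)/3))⁻¹ := by
        have hn : (q:ℝ) ^ (2:ℕ) = q ^ ((2:ℝ)) := by
          rw [← Real.rpow_natCast q 2]; norm_num
        rw [hn, ← Real.rpow_neg hq.le, ← Real.rpow_add hq, ← Real.rpow_neg hq.le]
        norm_num
      calc (a k * q⁻¹) ^ (2:ℕ)
          = (p ^ ((1:ℝ)/3)) ^ (2:ℕ) * ((q ^ ((2:ℝ)/3)) ^ (2:ℕ) * (q⁻¹) ^ (2:ℕ)) := by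
            rw [ha]; ring
        _ = p ^ ((2:ℝ)/3) * (q ^ ((4:ℝ)/3) * (q ^ (2:ℕ))⁻¹) := by rw [e1, e2, e3]
        _ = p ^ ((2:ℝ)/3) * (q ^ ((2:ℝ)/3))⁻¹ := by rw [e4]
        _ = (p / q) ^ ((2:ℝ)/3) := by
            rw [Real.div_rpow hp.le hq.le]
            exact (div_eq_mul_inv _ _).symm
    rw [Finset.sum_congr rfl (fun k _ => hterm1 k), Finset.sum_congr rfl (fun k _ => hterm2 k)]
    ring
end

section
/- Let ε > 0, let W ∈ ℝ^{r×r} be diagonal with W₁₁ ≥ W₂₂ ≥ ⋯ ≥ W_{rr} > 0, let X ∈ ℝ^{m×n} with m ≥ r, n ≥ r have rank s with s ≤ r, and let X = U·Σ_X·Vᵀ be a reduced singular value decomposition, where U ∈ ℝ^{m×s} and V ∈ ℝ^{n×s} have orthonormal columns and Σ_X = diag(σ₁, …, σ_s) with σ₁ ≥ ⋯ ≥ σ_s > 0. Let W_X = diag(W₁₁, …, W_{ss}), and define Ã = [U·Σ_X^{1/2}·W_X^{1/2} , 0] ∈ ℝ^{m×r} and B̃ = [V·Σ_X^{1/2}·W_X^{-1/2}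 , 0] ∈ ℝ^{n×r} (padding with zero columns). Then Ã·B̃ᵀ = X and (1/2)(‖Ã·W^{-1}‖_L^{1} + ‖B̃‖_L^{1}) = Σ_{i=1}^{r} log((σ_i / W_{ii})^{1/2} + ε), where σ_i = 0 for i > s. -/
open Matrix

/-- The logarithmic norm `‖A‖_L^p = ∑ᵢ log(σᵢ(A)^p + ε)`
(here `min(m,n) = n`, the number of columns). -/
noncomputable def logNorm (ε p : ℝ) {m n : ℕ} (A : Matrix (Fin m) (Fin n) ℝ) : ℝ :=
  ∑ j, Real.log ((singularValues A j) ^ p + ε)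

section helpers
open Polynomial

lemma my_charpoly_conj_s14 {k : Type*} [DecidableEq k] [Fintype k]
    (U D V : Matrix k k ℝ) (h : U * V = 1) : (U * D * V).charpoly = D.charpoly := by
  have hmap : (C : ℝ →+* ℝ[X]).mapMatrix U * (C : ℝ →+* ℝ[X]).mapMatrix V = 1 := by
    rw [← _root_.map_mul, h, _root_.map_one]
  have hcm : charmatrix (U * D * V) =
      (C : ℝ →+* ℝ[X]).mapMatrix U * charmatrix D * (C : ℝ →+* ℝ[X]).mapMatrix V := by
    rw [charmatrix, charmatrix, mul_sub, sub_mul, ← _root_.map_mul, ← _root_.map_mul]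
    congr 1
    have : (C : ℝ →+* ℝ[X]).mapMatrix U * Matrix.scalar k (X : ℝ[X]) =
        Matrix.scalar k (X : ℝ[X]) * (C : ℝ →+* ℝ[X]).mapMatrix U := by
      exact ((Matrix.scalar_commute (X : ℝ[X]) (fun r' => Commute.all _ _) _)).symm
    rw [this, mul_assoc, hmap, mul_one]
  rw [Matrix.charpoly, Matrix.charpoly, hcm, det_mul, det_mul]
  have : ((C : ℝ →+* ℝ[X]).mapMatrix U).det * ((C : ℝ →+* ℝ[X]).mapMatrix V).det = 1 := by
    rw [← det_mul, hmap, det_one]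
  calc ((C : ℝ →+* ℝ[X]).mapMatrix U).det * (charmatrix D).det *
        ((C : ℝ →+* ℝ[X]).mapMatrix V).det
      = (charmatrix D).det * (((C : ℝ →+* ℝ[X]).mapMatrix U).det *
        ((C : ℝ →+* ℝ[X]).mapMatrix V).det) := by ring
    _ = (charmatrix D).det := by rw [this, mul_one]

lemma charpoly_diagonal_real {k : ℕ} (d : Fin k → ℝ) :
    (diagonal d).charpoly = ∏ i, (X - C (d i)) := by
  rw [Matrix.charpoly_of_upperTriangular _ (Matrix.blockTriangular_diagonal d)]
  simp

lemma sum_f_eigenvalues {k : ℕ} {A : Matrix (Fin k) (Fin k) ℝ} (hA : A.IsHermitian)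
    (d : Fin k → ℝ) (hd : A = diagonal d) (f : ℝ → ℝ) :
    ∑ i, f (hA.eigenvalues i) = ∑ i, f (d i) := by
  have hU : ((hA.eigenvectorUnitary : Matrix (Fin k) (Fin k) ℝ)) *
      star (hA.eigenvectorUnitary : Matrix (Fin k) (Fin k) ℝ) = 1 :=
    (Matrix.mem_unitaryGroup_iff).mp hA.eigenvectorUnitary.2
  have h1 : A.charpoly = ∏ i, (X - C (hA.eigenvalues i)) := by
    conv_lhs => rw [hA.spectral_theorem, Unitary.conjStarAlgAut_apply]
    rw [my_charpoly_conj_s14 _ _ _ hU]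
    have : Matrix.diagonal (RCLike.ofReal ∘ hA.eigenvalues) = Matrix.diagonal hA.eigenvalues := by
      congr 1
    rw [this, charpoly_diagonal_real]
  have h2 : A.charpoly = ∏ i, (X - C (d i)) := by
    rw [hd, charpoly_diagonal_real]
  have key : ∀ g : Fin k → ℝ, (∏ i, (X - C (g i))).roots = Finset.univ.val.map g := by
    intro g
    have : (∏ i, (X - C (g i))) =
        ((Finset.univ.val.map g).map fun a => X - C a).prod := by
      rw [Multiset.map_map]
      rfl
    rw [this, Polynomial.roots_multiset_prod_X_sub_C]
  have hm : Finset.univ.val.map hA.eigenvalues = Finset.univ.val.map d := by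
    have := congrArg Polynomial.roots (h1.symm.trans h2)
    rwa [key, key] at this
  calc ∑ i, f (hA.eigenvalues i) = ((Finset.univ.val.map hA.eigenvalues).map f).sum := by
        rw [Multiset.map_map]; rfl
    _ = ((Finset.univ.val.map d).map f).sum := by rw [hm]
    _ = ∑ i, f (d i) := by rw [Multiset.map_map]; rfl

lemma padCols_mul_transpose {m n s r : ℕ} (h : s ≤ r)
    (M : Matrix (Fin m) (Fin s) ℝ) (N : Matrix (Fin n) (Fin s) ℝ) :
    padCols h M * (padCols h N)ᵀ = M * Nᵀ := by
  ext i j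
  rw [Matrix.mul_apply, Matrix.mul_apply]
  have hsum : ∀ k : Fin r, padCols h M i k * (padCols h N)ᵀ k j =
      (fun t : ℕ => if ht : t < s then M i ⟨t, ht⟩ * N j ⟨t, ht⟩ else 0) (k : ℕ) := by
    intro k
    simp only [padCols, transpose_apply, Matrix.of_apply]
    split_ifs <;> simp
  rw [Finset.sum_congr rfl fun k _ => hsum k]
  rw [Fin.sum_univ_eq_sum_range (fun t : ℕ => if ht : t < s then M i ⟨t, ht⟩ * N j ⟨t, ht⟩ else 0) r]
  rw [← Finset.sum_subset (Finset.range_subset_range.mpr h)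
    (fun t _ ht => dif_neg (by simpa [Finset.mem_range] using ht))]
  rw [← Fin.sum_univ_eq_sum_range]
  exact Finset.sum_congr rfl fun k _ => by simp

lemma padCols_mul_diagonal {m s r : ℕ} (h : s ≤ r)
    (M : Matrix (Fin m) (Fin s) ℝ) (v : Fin r → ℝ) :
    padCols h M * Matrix.diagonal v =
      padCols h (M * Matrix.diagonal fun k => v (Fin.castLE h k)) := by
  ext i j
  rw [Matrix.mul_diagonal]
  simp only [padCols, Matrix.of_apply]
  split_ifs with hj
  · rw [Matrix.mul_diagonal]
    congr 1
  · simp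

lemma transpose_padCols_mul {m s r : ℕ} (h : s ≤ r) (M : Matrix (Fin m) (Fin s) ℝ)
    (d : Fin s → ℝ) (hM : Mᵀ * M = Matrix.diagonal d) :
    (padCols h M)ᵀ * padCols h M =
      Matrix.diagonal (fun j : Fin r => if hj : (j : ℕ) < s then d ⟨j, hj⟩ else 0) := by
  ext j k
  rw [Matrix.mul_apply]
  simp only [padCols, transpose_apply, Matrix.of_apply, Matrix.diagonal_apply]
  by_cases hj : (j : ℕ) < s
  · by_cases hk : (k : ℕ) < s
    · have : ∑ i, (if hj' : (j:ℕ) < s then M i ⟨j, hj'⟩ else 0) *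
          (if hk' : (k:ℕ) < s then M i ⟨k, hk'⟩ else 0) =
          ∑ i, M i ⟨j, hj⟩ * M i ⟨k, hk⟩ := by
        refine Finset.sum_congr rfl fun i _ => by rw [dif_pos hj, dif_pos hk]
      rw [this]
      have := congrFun (congrFun hM ⟨j, hj⟩) ⟨k, hk⟩
      rw [Matrix.mul_apply] at this
      simp only [transpose_apply] at this
      rw [this]
      by_cases hjk : j = k
      · subst hjk; simp [Matrix.diagonal_apply, hj]
      · have hv : (j : ℕ) ≠ (k : ℕ) := fun hh => hjk (Fin.ext hh)
        simp [Matrix.diagonal_apply, hjk, Fin.ext_iff, hv]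
    · have hjk : j ≠ k := fun hh => hk (hh ▸ hj)
      rw [if_neg hjk]
      refine Finset.sum_eq_zero fun i _ => by rw [dif_neg hk, mul_zero]
  · rw [Finset.sum_eq_zero fun i _ => by rw [dif_neg hj, zero_mul]]
    rcases eq_or_ne j k with hjk | hjk
    · subst hjk; simp [hj]
    · simp [hjk]

lemma mul_diagonal_gram {m s : ℕ} (U : Matrix (Fin m) (Fin s) ℝ) (hU : Uᵀ * U = 1)
    (e : Fin s → ℝ) :
    (U * Matrix.diagonal e)ᵀ * (U * Matrix.diagonal e) =
      Matrix.diagonal (fun k => e k * e k) := by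
  rw [Matrix.transpose_mul, Matrix.diagonal_transpose,
    Matrix.mul_assoc, ← Matrix.mul_assoc Uᵀ U (Matrix.diagonal e), hU, Matrix.one_mul,
    Matrix.diagonal_mul_diagonal]

lemma logNorm_of_diagonal {m n : ℕ} (ε : ℝ) (A : Matrix (Fin m) (Fin n) ℝ)
    (d : Fin n → ℝ) (hd : Aᵀ * A = Matrix.diagonal d) :
    logNorm ε 1 A = ∑ j, Real.log (Real.sqrt (d j) + ε) := by
  unfold logNorm singularValues
  simp only [Real.rpow_one]
  exact sum_f_eigenvalues (Matrix.isHermitian_conjTranspose_mul_self A) d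
    (by rw [Matrix.conjTranspose_eq_transpose_of_trivial]; exact hd)
    (fun x => Real.log (Real.sqrt x + ε))

end helpers

/-- With `Ã = [U Σ_X^{1/2} W_X^{1/2}, 0]` and `B̃ = [V Σ_X^{1/2} W_X^{-1/2}, 0]`,
one has `Ã B̃ᵀ = X` and
`(1/2)(‖Ã W⁻¹‖_L^1 + ‖B̃‖_L^1) = ∑_{i=1}^r log((σᵢ / Wᵢᵢ)^{1/2} + ε)`,
where `σᵢ = 0` for `i > s`. -/
theorem stmt14 {m n r s : ℕ} (hmr : r ≤ m) (hnr : r ≤ n) (ε : ℝ) (hε : 0 < ε)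
    (w : Fin r → ℝ) (hw_pos : ∀ i, 0 < w i) (hw_mono : Antitone w)
    (X : Matrix (Fin m) (Fin n) ℝ) (hrank : X.rank = s) (hsr : s ≤ r)
    (U : Matrix (Fin m) (Fin s) ℝ) (V : Matrix (Fin n) (Fin s) ℝ)
    (hU : Uᵀ * U = 1) (hV : Vᵀ * V = 1)
    (σ : Fin s → ℝ) (hσ_pos : ∀ i, 0 < σ i) (hσ_mono : Antitone σ)
    (hX : X = U * Matrix.diagonal σ * Vᵀ) :
    (padCols hsr (U * Matrix.diagonal
        (fun k => Real.sqrt (σ k) * Real.sqrt (w (Fin.castLE hsr k)))) *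
      (padCols hsr (V * Matrix.diagonal
        (fun k => Real.sqrt (σ k) * (Real.sqrt (w (Fin.castLE hsr k)))⁻¹)))ᵀ = X) ∧
    (1/2) * (logNorm ε 1 (padCols hsr (U * Matrix.diagonal
        (fun k => Real.sqrt (σ k) * Real.sqrt (w (Fin.castLE hsr k)))) *
          (Matrix.diagonal w)⁻¹) +
      logNorm ε 1 (padCols hsr (V * Matrix.diagonal
        (fun k => Real.sqrt (σ k) * (Real.sqrt (w (Fin.castLE hsr k)))⁻¹)))) =
      ∑ i : Fin r, Real.log
        (((if h : (i : ℕ) < s then σ ⟨i, h⟩ else 0) / w i) ^ ((1 : ℝ)/2) + ε) := by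
  set a : Fin s → ℝ := fun k => Real.sqrt (σ k) * Real.sqrt (w (Fin.castLE hsr k)) with ha
  set b : Fin s → ℝ := fun k => Real.sqrt (σ k) * (Real.sqrt (w (Fin.castLE hsr k)))⁻¹ with hb
  have hwpos : ∀ k : Fin s, 0 < w (Fin.castLE hsr k) := fun k => hw_pos _
  have hsq : ∀ k : Fin s, Real.sqrt (σ k) * Real.sqrt (σ k) = σ k :=
    fun k => Real.mul_self_sqrt (hσ_pos k).le
  have hsw : ∀ k : Fin s, Real.sqrt (w (Fin.castLE hsr k)) * Real.sqrt (w (Fin.castLE hsr k))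
      = w (Fin.castLE hsr k) := fun k => Real.mul_self_sqrt (hwpos k).le
  have hswne : ∀ k : Fin s, Real.sqrt (w (Fin.castLE hsr k)) ≠ 0 :=
    fun k => (Real.sqrt_pos.mpr (hwpos k)).ne'
  constructor
  · rw [padCols_mul_transpose, Matrix.transpose_mul, Matrix.diagonal_transpose, hX,
      ← Matrix.mul_assoc, Matrix.mul_assoc U (Matrix.diagonal a) (Matrix.diagonal b),
      Matrix.diagonal_mul_diagonal]
    have hab : (fun i => a i * b i) = σ := by
      funext k
      calc a k * b k = (Real.sqrt (σ k) * Real.sqrt (σ k)) *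
            (Real.sqrt (w (Fin.castLE hsr k)) * (Real.sqrt (w (Fin.castLE hsr k)))⁻¹) := by
            simp only [ha, hb]; ring
        _ = σ k := by rw [hsq, mul_inv_cancel₀ (hswne k), mul_one]
    rw [hab]
  · have hbfun : (fun j : Fin r => if hj : (j : ℕ) < s then b ⟨j, hj⟩ * b ⟨j, hj⟩ else 0)
        = (fun j : Fin r => if hj : (j : ℕ) < s then σ ⟨j, hj⟩ / w j else 0) := by
      funext j
      by_cases hj : (j : ℕ) < s
      · simp only [dif_pos hj]
        have hcast : Fin.castLE hsr ⟨(j : ℕ), hj⟩ = j := Fin.ext rfl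
        calc b ⟨j, hj⟩ * b ⟨j, hj⟩
            = (Real.sqrt (σ ⟨j, hj⟩) * Real.sqrt (σ ⟨j, hj⟩)) *
              ((Real.sqrt (w (Fin.castLE hsr ⟨j, hj⟩)) *
                Real.sqrt (w (Fin.castLE hsr ⟨j, hj⟩)))⁻¹) := by
              simp only [hb, mul_inv]; ring
          _ = σ ⟨j, hj⟩ / w j := by
              rw [hsq, hsw, hcast, div_eq_mul_inv]
      · simp only [dif_neg hj]
    have hgramB : (padCols hsr (V * Matrix.diagonal b))ᵀ * padCols hsr (V * Matrix.diagonal b)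
        = Matrix.diagonal (fun j : Fin r =>
            if hj : (j : ℕ) < s then σ ⟨j, hj⟩ / w j else 0) := by
      rw [transpose_padCols_mul hsr _ _ (mul_diagonal_gram V hV b), hbfun]
    have hinv : (Matrix.diagonal w)⁻¹ = Matrix.diagonal (fun i => (w i)⁻¹) := by
      apply Matrix.inv_eq_right_inv
      rw [Matrix.diagonal_mul_diagonal]
      have : (fun i => w i * (w i)⁻¹) = fun _ => (1 : ℝ) :=
        funext fun i => mul_inv_cancel₀ (hw_pos i).ne'
      rw [this, Matrix.diagonal_one]
    have hAW : padCols hsr (U * Matrix.diagonal a) * (Matrix.diagonal w)⁻¹ =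
        padCols hsr (U * Matrix.diagonal
          (fun k => a k * (w (Fin.castLE hsr k))⁻¹)) := by
      rw [hinv, padCols_mul_diagonal, Matrix.mul_assoc, Matrix.diagonal_mul_diagonal]
    have hafun : (fun j : Fin r => if hj : (j : ℕ) < s then
          (a ⟨j, hj⟩ * (w (Fin.castLE hsr ⟨j, hj⟩))⁻¹) *
          (a ⟨j, hj⟩ * (w (Fin.castLE hsr ⟨j, hj⟩))⁻¹) else 0)
        = (fun j : Fin r => if hj : (j : ℕ) < s then σ ⟨j, hj⟩ / w j else 0) := by
      funext j
      by_cases hj : (j : ℕ) < s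
      · simp only [dif_pos hj]
        have hcast : Fin.castLE hsr ⟨(j : ℕ), hj⟩ = j := Fin.ext rfl
        have hwj : w (Fin.castLE hsr ⟨(j : ℕ), hj⟩) = w j := by rw [hcast]
        calc (a ⟨j, hj⟩ * (w (Fin.castLE hsr ⟨j, hj⟩))⁻¹) *
              (a ⟨j, hj⟩ * (w (Fin.castLE hsr ⟨j, hj⟩))⁻¹)
            = (Real.sqrt (σ ⟨j, hj⟩) * Real.sqrt (σ ⟨j, hj⟩)) *
              ((Real.sqrt (w (Fin.castLE hsr ⟨j, hj⟩)) *
                Real.sqrt (w (Fin.castLE hsr ⟨j, hj⟩))) *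
              ((w (Fin.castLE hsr ⟨j, hj⟩))⁻¹ * (w (Fin.castLE hsr ⟨j, hj⟩))⁻¹)) := by
              simp only [ha]; ring
          _ = σ ⟨j, hj⟩ / w j := by
              rw [hsq, hsw, hwj, div_eq_mul_inv]
              have : w j * ((w j)⁻¹ * (w j)⁻¹) = (w j)⁻¹ := by
                rw [← mul_assoc, mul_inv_cancel₀ (hw_pos j).ne', one_mul]
              rw [this]
      · simp only [dif_neg hj]
    have hgramA : (padCols hsr (U * Matrix.diagonal a) * (Matrix.diagonal w)⁻¹)ᵀ *
        (padCols hsr (U * Matrix.diagonal a) * (Matrix.diagonal w)⁻¹) =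
        Matrix.diagonal (fun j : Fin r =>
          if hj : (j : ℕ) < s then σ ⟨j, hj⟩ / w j else 0) := by
      rw [hAW, transpose_padCols_mul hsr _ _ (mul_diagonal_gram U hU _), hafun]
    rw [logNorm_of_diagonal ε _ _ hgramA, logNorm_of_diagonal ε _ _ hgramB]
    rw [← two_mul, ← mul_assoc]
    norm_num
    refine Finset.sum_congr rfl fun i _ => ?_
    by_cases hi : (i : ℕ) < s
    · simp only [dif_pos hi]
      rw [Real.sqrt_eq_rpow]
    · simp only [dif_neg hi]
      rw [Real.sqrt_zero, zero_div, Real.zero_rpow (by norm_num)]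
end

section
/- Let X ∈ ℝ^{m×n} have rank s ≥ 1 with reduced singular value decomposition X = U·Σ·Vᵀ, where U ∈ ℝ^{m×s} and V ∈ ℝ^{n×s} have orthonormal columns and Σ ∈ ℝ^{s×s} is diagonal with strictly positive diagonal entries. Suppose X = A·Bᵀ for some A ∈ ℝ^{m×r} and B ∈ ℝ^{n×r}, and let A = U_A·Σ_A·V_Aᵀ be a compact singular value decomposition of A, where U_A ∈ ℝ^{m×ρ} and V_A ∈ ℝ^{r×ρ} have orthonormal columns, Σ_A ∈ ℝ^{ρ×ρ} is diagonal with strictly positive entries, and ρ = rank(A). Then Uᵀ·U_A·U_Aᵀ·U = I_s; equivalently, the matrix U_Aᵀ·U ∈ ℝ^{ρ×s} has orthonormal columns. -/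
open Matrix

/-- Let `X` have rank `s ≥ 1` with reduced SVD `X = U S Vᵀ`, suppose `X = A Bᵀ` and let
`A = U_A Σ_A V_Aᵀ` be a compact SVD of `A` with `ρ = rank A`.  Then
`Uᵀ U_A U_Aᵀ U = I_s`, i.e. `U_Aᵀ U` has orthonormal columns. -/
theorem stmt19 {m n r s ρ : ℕ} (hs : 1 ≤ s)
    (X : Matrix (Fin m) (Fin n) ℝ) (hrank : X.rank = s)
    (U : Matrix (Fin m) (Fin s) ℝ) (V : Matrix (Fin n) (Fin s) ℝ)
    (d : Fin s → ℝ) (hd : ∀ i, 0 < d i)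
    (hU : Uᵀ * U = 1) (hV : Vᵀ * V = 1)
    (hX : X = U * Matrix.diagonal d * Vᵀ)
    (A : Matrix (Fin m) (Fin r) ℝ) (B : Matrix (Fin n) (Fin r) ℝ)
    (hAB : X = A * Bᵀ)
    (UA : Matrix (Fin m) (Fin ρ) ℝ) (VA : Matrix (Fin r) (Fin ρ) ℝ)
    (dA : Fin ρ → ℝ) (hdA : ∀ i, 0 < dA i)
    (hUA : UAᵀ * UA = 1) (hVA : VAᵀ * VA = 1) (hρ : A.rank = ρ)
    (hA : A = UA * Matrix.diagonal dA * VAᵀ) :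
    Uᵀ * UA * UAᵀ * U = 1 := by
  set D' : Matrix (Fin s) (Fin s) ℝ := Matrix.diagonal (fun i => (d i)⁻¹) with hD'
  have hDD : Matrix.diagonal d * D' = 1 := by
    rw [hD', Matrix.diagonal_mul_diagonal]
    convert Matrix.diagonal_one using 2
    funext i
    exact mul_inv_cancel₀ (hd i).ne'
  have hUeq : U = X * V * D' := by
    rw [hX, Matrix.mul_assoc (U * Matrix.diagonal d) Vᵀ V, hV, Matrix.mul_one,
      Matrix.mul_assoc, hDD, Matrix.mul_one]
  have hUM : U = UA * (Matrix.diagonal dA * VAᵀ * Bᵀ * V * D') := by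
    rw [hUeq, hAB, hA]
    simp only [Matrix.mul_assoc]
  have hfix : UA * UAᵀ * U = U := by
    conv_lhs => rw [hUM]
    rw [← Matrix.mul_assoc, Matrix.mul_assoc UA UAᵀ UA, hUA, Matrix.mul_one, ← hUM]
  calc Uᵀ * UA * UAᵀ * U = Uᵀ * (UA * UAᵀ * U) := by simp only [Matrix.mul_assoc]
    _ = Uᵀ * U := by rw [hfix]
    _ = 1 := hU
end
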